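/- arXiv:math/0411387 — 5 statements merged into one kernel-verified Lean document; each statement's English description precedes it below -/
import Mathlib

section
/- If w is a word of length n with pairwise distinct letters, then Park(w) equals the standardization Std(w) of w, i.e. the permutation word whose i-th letter is #{ j : w_j ≤ w_i }. -/
open List

/-- `sortW w` is the nondecreasing rearrangement `w↑` of the word `w`. -/
def sortW (w : List ℕ) : List ℕ := w.mergeSort (fun a b => decide (a ≤ b))

/-- `a` is a parking function: a word over the positive integers whose
nondecreasing rearrangement `a↑ = a'₁ ⋯ a'ₙ` satisfies `a'ᵢ ≤ i` for all `i`. -/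
def IsPF (a : List ℕ) : Prop :=
  (∀ x ∈ a, 1 ≤ x) ∧ ∀ i, i < a.length → (sortW a).getD i 0 ≤ i + 1

/-- `dW w = min { i ≥ 1 : #{j : wⱼ ≤ i} < i }`. -/
noncomputable def dW (w : List ℕ) : ℕ := sInf {i | 1 ≤ i ∧ w.countP (fun x => decide (x ≤ i)) < i}

/-- Decrement by one every letter strictly greater than `d`. -/
def decAbove (d : ℕ) (w : List ℕ) : List ℕ := w.map (fun x => if d < x then x - 1 else x)

lemma mem_dW_set (w : List ℕ) :
    (w.length + 1) ∈ {i | 1 ≤ i ∧ w.countP (fun x => decide (x ≤ i)) < i} := by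
  refine ⟨by omega, ?_⟩
  have : w.countP (fun x => decide (x ≤ w.length + 1)) ≤ w.length := List.countP_le_length
  omega

lemma decAbove_sum_lt {w : List ℕ} (h : dW w ≠ w.length + 1) :
    (decAbove (dW w) w).sum < w.sum := by
  have hmem : 1 ≤ dW w ∧ w.countP (fun x => decide (x ≤ dW w)) < dW w := Nat.sInf_mem (⟨_, mem_dW_set w⟩ : Set.Nonempty _)
  have hle : dW w ≤ w.length + 1 := Nat.sInf_le (mem_dW_set w)
  obtain ⟨h1, h2⟩ := hmem
  have hlen : dW w ≤ w.length := by omega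
  -- there is a letter strictly greater than `dW w`
  have hx : ∃ x ∈ w, ¬ (x ≤ dW w) := by
    by_contra hc
    push_neg at hc
    have : w.countP (fun x => decide (x ≤ dW w)) = w.length := by
      rw [List.countP_eq_length]
      intro a ha
      simpa using hc a ha
    omega
  obtain ⟨x, hxw, hxd⟩ := hx
  have := List.sum_lt_sum (l := w) (f := fun y => if dW w < y then y - 1 else y) (g := id)
    (fun i _ => by dsimp; split <;> omega)
    ⟨x, hxw, by dsimp; rw [if_pos (by omega)]; omega⟩
  simpa [decAbove] using this

/-- The parkization `Park(w)` of a word `w` over the positive integers. -/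
noncomputable def park (w : List ℕ) : List ℕ :=
  if h : dW w = w.length + 1 then w
  else
    have : (decAbove (dW w) w).sum < w.sum := decAbove_sum_lt h
    park (decAbove (dW w) w)
termination_by w.sum

/-- The standardization `Std(w)`: its `i`-th letter is `#{j : wⱼ ≤ wᵢ}`. -/
def stdW (w : List ℕ) : List ℕ := w.map (fun x => w.countP (fun y => decide (y ≤ x)))

/-- `v[k]`: shift every letter of `v` by `k`. -/
def shiftW (k : ℕ) (v : List ℕ) : List ℕ := v.map (· + k)

/-- Shifted concatenation `u • v = u · v[k]`, `k = |u|`. -/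
def sconc (u v : List ℕ) : List ℕ := u ++ shiftW u.length v

/-- The multiset of all shuffles of two words, counted with multiplicity. -/
def shuffles : List ℕ → List ℕ → Multiset (List ℕ)
  | [], v => {v}
  | x :: u, [] => {x :: u}
  | x :: u, y :: v =>
      (shuffles u (y :: v)).map (fun w => x :: w) + (shuffles (x :: u) v).map (fun w => y :: w)
termination_by u v => u.length + v.length

/-- Shifted shuffle `u ⋒ v`, a multiset of words. -/
def sshuffle (u v : List ℕ) : Multiset (List ℕ) := shuffles u (shiftW u.length v)

/-- Iterated shifted shuffle `u₁ ⋒ u₂ ⋒ ⋯ ⋒ u_r`. -/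
def itersShuffle : List (List ℕ) → Multiset (List ℕ)
  | [] => {[]}
  | u :: rest => (itersShuffle rest).bind (fun v => sshuffle u v)

/-- Lexicographic pair-encoding `a ⊛ b` of two words of length `n` with letters in `[n]`:
the `i`-th letter is `(aᵢ - 1)·n + bᵢ`. -/
def pairEnc (n : ℕ) (a b : List ℕ) : List ℕ := List.zipWith (fun x y => (x - 1) * n + y) a b

/-- The internal product `a * b := Park(a ⊛ b)` of two parking functions of the same length. -/
noncomputable def iprod (a b : List ℕ) : List ℕ := park (pairEnc a.length a b)

/-- The word `1^m` of length `m` with all letters equal to `1`. -/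
def onesW (m : ℕ) : List ℕ := List.replicate m 1

/-- The multiset (without repetition) of all words `a` with `a↑ = π`. -/
def classM (π : List ℕ) : Multiset (List ℕ) :=
  (↑(π.permutations.dedup) : Multiset (List ℕ)).filter (fun a => sortW a = π)

open Classical in
/-- The finite set of all parking functions of length `n`. -/
noncomputable def PFfin (n : ℕ) : Finset (List ℕ) :=
  ((Finset.univ : Finset (Fin n → Fin n)).image
    (fun f => List.ofFn (fun i => (f i : ℕ) + 1))).filter IsPF

/-- Split a word into consecutive factors of the given lengths. -/
def splitFactors : List ℕ → List ℕ → List (List ℕ)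
  | [], _ => []
  | k :: ks, e => e.take k :: splitFactors ks (e.drop k)

/-- Iterated shifted concatenation. -/
def sconcAll : List (List ℕ) → List ℕ
  | [] => []
  | u :: rest => sconc u (sconcAll rest)

/-- Multiset of tuples `(a₁, …, a_r)` (as lists) with `aᵢ↑ = πᵢ`. -/
def tuplesM : List (List ℕ) → Multiset (List (List ℕ))
  | [] => {[]}
  | p :: ps => (classM p).bind (fun a => (tuplesM ps).map (fun A => a :: A))

/-- `π'` is a successor of `π`: the evaluation of `π'` is obtained from that of `π`
by merging two consecutive (modulo zeros) nonzero entries onto the left one. -/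
def IsSuccEv (π π' : List ℕ) : Prop :=
  ∃ i j : ℕ, 1 ≤ i ∧ i < j ∧ π.count i ≠ 0 ∧ π.count j ≠ 0 ∧
    (∀ k, i < k → k < j → π.count k = 0) ∧
    (∀ m, π'.count m = if m = i then π.count i + π.count j else if m = j then 0 else π.count m)

/-- The partial order `π ⪯ π'`: reflexive–transitive closure of the successor relation. -/
def succeq (π π' : List ℕ) : Prop := Relation.ReflTransGen IsSuccEv π π'


lemma countP_split (d : ℕ) (l : List ℕ) (hd : 1 ≤ d) :
    l.countP (fun x => decide (x ≤ d)) = l.countP (fun x => decide (x ≤ d - 1)) + l.count d := by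
  induction l with
  | nil => simp
  | cons a l ih =>
    simp only [countP_cons, count_cons, ih]
    rcases Nat.lt_trichotomy a d with h | h | h
    · simp [Nat.le_of_lt h, Nat.le_sub_one_of_lt h, Nat.ne_of_lt h]; omega
    · subst h; simp [Nat.not_le.2 (by omega : a - 1 < a)]; omega
    · simp [Nat.not_le.2 h, Nat.not_le.2 (by omega : d - 1 < a), (Nat.ne_of_gt h)]

lemma countP_le_of_nodup {l : List ℕ} (hnd : l.Nodup) (hpos : ∀ x ∈ l, 1 ≤ x) (i : ℕ) :
    l.countP (fun x => decide (x ≤ i)) ≤ i := by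
  rw [countP_eq_length_filter]
  have h1 : (l.filter (fun x => decide (x ≤ i))).Nodup := hnd.filter _
  have h2 : (l.filter (fun x => decide (x ≤ i))).toFinset ⊆ Finset.Icc 1 i := by
    intro x hx
    simp only [List.mem_toFinset, List.mem_filter, decide_eq_true_eq] at hx
    exact Finset.mem_Icc.2 ⟨hpos x hx.1, hx.2⟩
  calc (l.filter (fun x => decide (x ≤ i))).length
      = (l.filter (fun x => decide (x ≤ i))).toFinset.card := (List.toFinset_card_of_nodup h1).symm
    _ ≤ (Finset.Icc 1 i).card := Finset.card_le_card h2
    _ = i := by simp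

lemma dW_props (w : List ℕ) :
    1 ≤ dW w ∧ w.countP (fun x => decide (x ≤ dW w)) < dW w ∧
    (∀ i, 1 ≤ i → i < dW w → i ≤ w.countP (fun x => decide (x ≤ i))) ∧ dW w ≤ w.length + 1 := by
  have hmem : dW w ∈ {i | 1 ≤ i ∧ w.countP (fun x => decide (x ≤ i)) < i} :=
    Nat.sInf_mem ⟨_, mem_dW_set w⟩
  refine ⟨hmem.1, hmem.2, fun i hi1 hi2 => ?_, Nat.sInf_le (mem_dW_set w)⟩
  have := Nat.notMem_of_lt_sInf hi2
  simp only [Set.mem_setOf_eq, not_and, not_lt] at this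
  exact this hi1

lemma dW_not_mem {w : List ℕ} (hnd : w.Nodup) (hw : ∀ x ∈ w, 1 ≤ x) : dW w ∉ w := by
  obtain ⟨hd1, hd2, hd3, _⟩ := dW_props w
  intro hmem
  have hc : 1 ≤ w.count (dW w) := List.count_pos_iff.2 hmem
  have hsplit := countP_split (dW w) w hd1
  rcases Nat.eq_or_lt_of_le hd1 with h1 | h1
  · have : w.countP (fun x => decide (x ≤ dW w - 1)) = w.countP (fun x => decide (x ≤ 0)) := by
      rw [← h1]
    rw [this] at hsplit
    have hz : w.countP (fun x => decide (x ≤ 0)) = 0 := by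
      rw [List.countP_eq_zero]
      intro a ha
      have := hw a ha; simp; omega
    omega
  · have := hd3 (dW w - 1) (by omega) (by omega)
    omega

lemma park_std_aux : ∀ n : ℕ, ∀ w : List ℕ, w.sum = n → (∀ x ∈ w, 1 ≤ x) → w.Nodup →
    park w = stdW w := by
  intro n
  induction n using Nat.strong_induction_on with
  | _ n ih =>
  intro w hsum hw hnd
  obtain ⟨hd1, hd2, hd3, hd4⟩ := dW_props w
  by_cases h : dW w = w.length + 1
  · rw [park, dif_pos h]
    -- here counts are exact: for 1 ≤ i ≤ len, countP (≤ i) = i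
    have hcount : ∀ i, 1 ≤ i → i ≤ w.length → w.countP (fun x => decide (x ≤ i)) = i := by
      intro i hi1 hi2
      exact le_antisymm (countP_le_of_nodup hnd hw i) (hd3 i hi1 (by omega))
    have hlt : ∀ x ∈ w, x ≤ w.length := by
      rcases Nat.eq_zero_or_pos w.length with h0 | h0
      · intro x hx; rw [List.length_eq_zero_iff] at h0; subst h0; simp at hx
      · have := hcount w.length h0 le_rfl
        have hall := List.countP_eq_length.1 this
        intro x hx
        simpa using hall x hx
    unfold stdW
    conv_lhs => rw [← List.map_id w]
    apply List.map_congr_left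
    intro x hx
    exact (hcount x (hw x hx) (hlt x hx)).symm
  · rw [park, dif_neg h]
    set d := dW w with hd
    set f : ℕ → ℕ := fun x => if d < x then x - 1 else x with hf
    have hdw : d ∉ w := dW_not_mem hnd hw
    have hmap : decAbove d w = w.map f := rfl
    have hmono : ∀ x ∈ w, ∀ y ∈ w, (f x ≤ f y ↔ x ≤ y) := by
      intro x hx y hy
      have hxd : x ≠ d := fun hc => hdw (hc ▸ hx)
      have hyd : y ≠ d := fun hc => hdw (hc ▸ hy)
      simp only [hf]
      split_ifs <;> omega
    have hnd' : (w.map f).Nodup := by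
      refine hnd.map_on ?_
      intro x hx y hy hxy
      have h1 := (hmono x hx y hy).1 (le_of_eq hxy)
      have h2 := (hmono y hy x hx).1 (le_of_eq hxy.symm)
      omega
    have hw' : ∀ x ∈ w.map f, 1 ≤ x := by
      intro x hx
      obtain ⟨y, hy, rfl⟩ := List.mem_map.1 hx
      have := hw y hy
      simp only [hf]
      split_ifs <;> omega
    have hcnt : ∀ x ∈ w, (w.map f).countP (fun y => decide (y ≤ f x)) =
        w.countP (fun y => decide (y ≤ x)) := by
      intro x hx
      rw [List.countP_map]
      apply List.countP_congr
      intro y hy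
      simp only [Function.comp_apply, decide_eq_true_eq]
      exact hmono y hy x hx
    have hstd : stdW (w.map f) = stdW w := by
      unfold stdW
      rw [List.map_map]
      apply List.map_congr_left
      intro x hx
      exact hcnt x hx
    have hsum' : (decAbove d w).sum < n := hsum ▸ decAbove_sum_lt h
    rw [hmap] at hsum'
    show park (decAbove d w) = stdW w
    rw [hmap]
    rw [ih _ hsum' _ rfl hw' hnd', hstd]

/-- If `w` is a word with pairwise distinct letters, then `Park(w)` equals
the standardization `Std(w)`, whose `i`-th letter is `#{j : wⱼ ≤ wᵢ}`. -/
theorem park_eq_std_of_nodup (w : List ℕ) (hw : ∀ x ∈ w, 1 ≤ x) (hnd : w.Nodup) :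
    park w = stdW w := by
  exact park_std_aux w.sum w rfl hw hnd
end

section
/- If a is a parking function of length k and b is a parking function of length l, then the shifted concatenation a • b is a parking function of length k+l, and every word occurring in the shifted shuffle a ⋒ b is a parking function of length k+l. -/
open List

lemma sortW_perm (w : List ℕ) : sortW w ~ w := mergeSort_perm w _

lemma sortW_sorted (w : List ℕ) : Pairwise (· ≤ ·) (sortW w) := by
  have := List.pairwise_mergeSort (le := fun a b : ℕ => decide (a ≤ b))
    (fun a b c => by simp; omega) (fun a b => by simp; omega) w
  simpa [sortW] using this.imp (by simp)

lemma sortW_length (w : List ℕ) : (sortW w).length = w.length := length_mergeSort w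

lemma sortW_congr {v w : List ℕ} (h : v ~ w) : sortW v = sortW w :=
  Perm.eq_of_pairwise' (sortW_sorted v) (sortW_sorted w)
    ((sortW_perm v).trans (h.trans (sortW_perm w).symm))

lemma IsPF_perm {v w : List ℕ} (h : v ~ w) (hw : IsPF w) : IsPF v := by
  refine ⟨fun x hx => hw.1 x (h.mem_iff.mp hx), fun i hi => ?_⟩
  rw [sortW_congr h]
  exact hw.2 i (h.length_eq ▸ hi)

lemma IsPF.le_length {a : List ℕ} (ha : IsPF a) : ∀ x ∈ a, x ≤ a.length := by
  intro x hx
  have hx' : x ∈ sortW a := ((sortW_perm a).mem_iff).mpr hx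
  obtain ⟨i, hi, hix⟩ := List.getElem_of_mem hx'
  have := ha.2 i (by rw [← sortW_length]; exact hi)
  rw [List.getD_eq_getElem _ _ hi] at this
  rw [sortW_length] at hi
  omega

lemma sortW_sconc (a b : List ℕ) (ha : IsPF a) (hb : IsPF b) :
    sortW (sconc a b) = sortW a ++ shiftW a.length (sortW b) := by
  refine (fun hp hs => Perm.eq_of_pairwise' (sortW_sorted _) hs hp) ?_ ?_
  · refine (sortW_perm _).trans ?_
    exact Perm.append (sortW_perm a).symm (((sortW_perm b).symm).map _)
  · rw [pairwise_append]
    refine ⟨sortW_sorted a, ((sortW_sorted b).map _ (fun x y h => by simp; omega) : Pairwise (·≤·) _), ?_⟩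
    intro x hx y hy
    have hxa : x ≤ a.length := ha.le_length x ((sortW_perm a).mem_iff.mp hx)
    simp only [shiftW, mem_map] at hy
    obtain ⟨z, hz, rfl⟩ := hy
    have : 1 ≤ z := hb.1 z ((sortW_perm b).mem_iff.mp hz)
    omega

lemma IsPF_sconc (a b : List ℕ) (ha : IsPF a) (hb : IsPF b) : IsPF (sconc a b) := by
  constructor
  · intro x hx
    rcases mem_append.mp hx with h | h
    · exact ha.1 x h
    · simp only [shiftW, mem_map] at h
      obtain ⟨z, hz, rfl⟩ := h
      have := hb.1 z hz
      omega
  · intro i hi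
    rw [sortW_sconc a b ha hb]
    have hla : (sortW a).length = a.length := sortW_length a
    rcases lt_or_ge i a.length with h | h
    · rw [getD_append _ _ _ _ (by omega)]
      exact ha.2 i h
    · rw [getD_append_right _ _ _ _ (by omega), hla]
      have hlen : (sconc a b).length = a.length + b.length := by
        simp [sconc, shiftW]
      have hib : i - a.length < b.length := by omega
      have := hb.2 (i - a.length) hib
      have hlb : i - a.length < (sortW b).length := by rw [sortW_length]; exact hib
      rw [List.getD_eq_getElem _ _ hlb] at this
      have hmap : i - a.length < (shiftW a.length (sortW b)).length := by
        simpa [shiftW] using hlb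
      rw [List.getD_eq_getElem _ _ hmap]
      simp only [shiftW, getElem_map]
      omega

lemma shuffles_perm : ∀ (u v : List ℕ), ∀ c ∈ shuffles u v, c ~ u ++ v := by
  intro u v
  induction u, v using shuffles.induct with
  | case1 v => intro c hc; simp [shuffles] at hc; simp [hc]
  | case2 x u => intro c hc; simp [shuffles] at hc; simp [hc]
  | case3 x u y v ih1 ih2 =>
    intro c hc
    rw [shuffles] at hc
    rcases Multiset.mem_add.mp hc with h | h <;> obtain ⟨w, hw, rfl⟩ := Multiset.mem_map.mp h
    · exact (ih1 w hw).cons x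
    · exact ((ih2 w hw).cons y).trans perm_middle.symm
/-- If `a ∈ PF_k` and `b ∈ PF_l`, then the shifted concatenation `a • b`
is a parking function of length `k + l`, and every word occurring in the shifted
shuffle `a ⋒ b` is a parking function of length `k + l`. -/
theorem sconc_sshuffle_parking (a b : List ℕ) (ha : IsPF a) (hb : IsPF b) :
    (IsPF (sconc a b) ∧ (sconc a b).length = a.length + b.length) ∧
    (∀ c ∈ sshuffle a b, IsPF c ∧ c.length = a.length + b.length) := by
  have hlen : (sconc a b).length = a.length + b.length := by simp [sconc, shiftW]
  refine ⟨⟨IsPF_sconc a b ha hb, hlen⟩, fun c hc => ?_⟩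
  have hperm : c ~ sconc a b := shuffles_perm a (shiftW a.length b) c hc
  exact ⟨IsPF_perm hperm (IsPF_sconc a b ha hb), hperm.length_eq.trans hlen⟩
end

section
/- Let n ≥ 1 and let a be a parking function of length n. Then a is prime (i.e. its only breakpoint is n) if and only if there do not exist parking functions u of length k ≥ 1 and v of length l ≥ 1 with k + l = n such that a occurs in the shifted shuffle u ⋒ v. -/
open List

lemma sortW_perm_s3 (a : List ℕ) : (sortW a).Perm a := List.mergeSort_perm a _

lemma sortW_sorted_s3 (a : List ℕ) :
    List.Pairwise (fun x y : ℕ => x ≤ y) (sortW a) := by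
  have := List.pairwise_mergeSort (le := fun a b : ℕ => decide (a ≤ b))
    (fun a b c hab hbc => by simp at *; omega)
    (fun a b => by simpa using Nat.le_total a b) a
  exact this.imp (fun h => by simpa using h)

lemma pf_count_char (a : List ℕ) :
    (∀ i, i < a.length → (sortW a).getD i 0 ≤ i + 1) ↔
    (∀ i, i < a.length → i + 1 ≤ a.countP (fun x => decide (x ≤ i + 1))) := by
  have hlen : (sortW a).length = a.length := (sortW_perm_s3 a).length_eq
  have hcp : ∀ p : ℕ → Bool, a.countP p = (sortW a).countP p :=
    fun p => ((sortW_perm_s3 a).countP_eq p).symm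
  have hsorted := sortW_sorted_s3 a
  rw [List.pairwise_iff_getElem] at hsorted
  set s := sortW a with hs
  constructor
  · intro h i hi
    rw [hcp]
    have hi' : i < s.length := by omega
    have htk : (s.take (i+1)).countP (fun x => decide (x ≤ i + 1)) = (s.take (i+1)).length := by
      rw [List.countP_eq_length]
      intro x hx
      obtain ⟨j, hj, hje⟩ := List.getElem_of_mem hx
      have hj' : j < s.length := by
        have : (s.take (i+1)).length = min (i+1) s.length := List.length_take; omega
      rw [List.getElem_take] at hje
      have hji : j ≤ i := by
        have : (s.take (i+1)).length = min (i+1) s.length := List.length_take; omega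
      have hsi : s[i] ≤ i + 1 := by
        have := h i hi; rwa [List.getD_eq_getElem s 0 hi'] at this
      rcases Nat.lt_or_ge j i with hlt | hge
      · have := hsorted j i hj' hi' hlt
        simp only [decide_eq_true_eq]; omega
      · have : j = i := by omega
        subst this; simp only [decide_eq_true_eq]; omega
    have hlt : (s.take (i+1)).length = i + 1 := by
      rw [s.length_take]; omega
    have : (s.take (i+1)).countP (fun x => decide (x ≤ i + 1)) ≤ s.countP (fun x => decide (x ≤ i + 1)) :=
      (List.take_sublist (i+1) s).countP_le
    omega
  · intro h i hi
    have hi' : i < s.length := by omega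
    rw [List.getD_eq_getElem s 0 hi']
    by_contra hgt
    push_neg at hgt
    have hc := h i hi
    rw [hcp] at hc
    have hsplit : s.countP (fun x => decide (x ≤ i + 1)) =
        (s.take i).countP (fun x => decide (x ≤ i + 1)) +
        (s.drop i).countP (fun x => decide (x ≤ i + 1)) := by
      conv_lhs => rw [← List.take_append_drop i s]
      exact List.countP_append
    have hdrop : (s.drop i).countP (fun x => decide (x ≤ i + 1)) = 0 := by
      rw [List.countP_eq_zero]
      intro x hx
      obtain ⟨j, hj, hje⟩ := List.getElem_of_mem hx
      rw [List.getElem_drop] at hje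
      have hj' : i + j < s.length := by
        have : (s.drop i).length = s.length - i := List.length_drop; omega
      have : s[i] ≤ s[i+j] := by
        rcases Nat.eq_zero_or_pos j with h0 | h0
        · subst h0; simp
        · exact hsorted i (i+j) hi' hj' (by omega)
      simp only [decide_eq_true_eq, not_le] at *
      omega
    have htk : (s.take i).countP (fun x => decide (x ≤ i + 1)) ≤ i := by
      have : (s.take i).countP (fun x => decide (x ≤ i + 1)) ≤ (s.take i).length := List.countP_le_length
      have : (s.take i).length = min i s.length := List.length_take; omega
    omega

lemma countP_split_s3 (l : List ℕ) (p q : ℕ → Bool) :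
    l.countP q = l.countP (fun x => q x && p x) + l.countP (fun x => q x && !p x) := by
  induction l with
  | nil => simp
  | cons x t ih =>
    by_cases hp : p x <;> by_cases hq : q x <;>
      simp [List.countP_cons, hp, hq, ih] <;> omega

lemma shuffles_nil_right (u : List ℕ) : shuffles u [] = {u} := by
  cases u <;> simp [shuffles]

lemma cons_mem_shuffles_left {w u v : List ℕ} (x : ℕ) (h : w ∈ shuffles u v) :
    x :: w ∈ shuffles (x :: u) v := by
  cases v with
  | nil =>
    rw [shuffles_nil_right] at h
    rw [shuffles_nil_right]
    simp at h ⊢; rw [h]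
  | cons y v =>
    rw [shuffles]
    exact Multiset.mem_add.mpr (Or.inl (Multiset.mem_map_of_mem _ h))

lemma cons_mem_shuffles_right {w u v : List ℕ} (y : ℕ) (h : w ∈ shuffles u v) :
    y :: w ∈ shuffles u (y :: v) := by
  cases u with
  | nil => simp [shuffles] at h ⊢; rw [h]
  | cons x u =>
    rw [shuffles]
    exact Multiset.mem_add.mpr (Or.inr (Multiset.mem_map_of_mem _ h))

lemma self_mem_shuffles_filter (p : ℕ → Bool) :
    ∀ a : List ℕ, a ∈ shuffles (a.filter p) (a.filter (fun x => !p x))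
  | [] => by simp [shuffles]
  | x :: t => by
    by_cases hx : p x
    · rw [List.filter_cons, List.filter_cons, if_pos hx, if_neg (by simp [hx])]
      exact cons_mem_shuffles_left x (self_mem_shuffles_filter p t)
    · rw [List.filter_cons, List.filter_cons, if_neg (by simp [hx]), if_pos (by simp [hx])]
      exact cons_mem_shuffles_right x (self_mem_shuffles_filter p t)

lemma perm_of_mem_shuffles (u v w : List ℕ) (h : w ∈ shuffles u v) : w.Perm (u ++ v) := by
  induction u, v using shuffles.induct generalizing w with
  | case1 v => simp [shuffles] at h; simp [h]
  | case2 x u => simp [shuffles] at h; simp [h]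
  | case3 x u y v ih1 ih2 =>
    rw [shuffles] at h
    rcases Multiset.mem_add.mp h with h | h
    · obtain ⟨w', hw', rfl⟩ := Multiset.mem_map.mp h
      exact (ih1 w' hw').cons x
    · obtain ⟨w', hw', rfl⟩ := Multiset.mem_map.mp h
      exact ((ih2 w' hw').cons y).trans List.perm_middle.symm

/-- For `n ≥ 1` and `a ∈ PF_n`, `a` is prime (its only breakpoint `b ≥ 1`
is `b = n`) iff `a` does not occur in any shifted shuffle `u ⋒ v` of parking functions
`u ∈ PF_k`, `v ∈ PF_l` with `k, l ≥ 1` and `k + l = n`. -/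
theorem prime_iff_not_in_shifted_shuffle (n : ℕ) (hn : 1 ≤ n) (a : List ℕ)
    (ha : IsPF a) (hlen : a.length = n) :
    (∀ b, 1 ≤ b → a.countP (fun x => decide (x ≤ b)) = b → b = n) ↔
      ¬ ∃ u v : List ℕ, IsPF u ∧ IsPF v ∧ 1 ≤ u.length ∧ 1 ≤ v.length ∧
        u.length + v.length = n ∧ a ∈ sshuffle u v := by
  constructor
  · rintro hprime ⟨u, v, hu, hv, hku, hkv, hsum, hmem⟩
    set k := u.length with hk
    have huc : u.countP (fun x => decide (x ≤ k)) = k := by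
      have h1 := (pf_count_char u).mp hu.2 (k-1) (by omega)
      have h2 : u.countP (fun x => decide (x ≤ k)) ≤ u.length := List.countP_le_length
      have he : k - 1 + 1 = k := by omega
      rw [he] at h1
      omega
    have hvc : (shiftW k v).countP (fun x => decide (x ≤ k)) = 0 := by
      rw [List.countP_eq_zero]
      intro x hx
      obtain ⟨y, hy, rfl⟩ := List.mem_map.mp hx
      have := hv.1 y hy
      simp only [decide_eq_true_eq]
      omega
    have hmem' : a ∈ shuffles u (shiftW k v) := hmem
    have hperm := perm_of_mem_shuffles _ _ _ hmem'
    have hac : a.countP (fun x => decide (x ≤ k)) = k := by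
      rw [hperm.countP_eq, List.countP_append]
      omega
    have := hprime k (by omega) hac
    omega
  · intro hno b hb hbp
    by_contra hbn
    have hble : b ≤ n := by
      have : a.countP (fun x => decide (x ≤ b)) ≤ a.length := List.countP_le_length
      omega
    have hblt : b < n := by omega
    set u := a.filter (fun x => decide (x ≤ b)) with hud
    set w := a.filter (fun x => decide (b < x)) with hwd
    set v := w.map (· - b) with hvd
    have achar := (pf_count_char a).mp ha.2
    have hulen : u.length = b := by
      rw [hud, ← List.countP_eq_length_filter, hbp]
    have hwlen : w.length = n - b := by
      rw [hwd, ← List.countP_eq_length_filter]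
      have hsplit := countP_split_s3 a (fun x => decide (x ≤ b)) (fun _ => true)
      have h1 : a.countP (fun _ => true) = a.length := by
        simp [List.countP_eq_length]
      have h2 : a.countP (fun x => true && decide (x ≤ b)) = b := by
        rw [List.countP_congr (q := fun x => decide (x ≤ b)) (fun x _ => by simp), hbp]
      have h3 : a.countP (fun x => true && !decide (x ≤ b)) =
          a.countP (fun x => decide (b < x)) := by
        refine List.countP_congr (fun x _ => ?_)
        simp only [Bool.true_and, Bool.not_eq_true', decide_eq_false_iff_not,
          decide_eq_true_eq]
        omega
      omega
    have hvlen : v.length = n - b := by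
      rw [hvd, List.length_map, hwlen]
    apply hno
    refine ⟨u, v, ⟨?_, ?_⟩, ⟨?_, ?_⟩, ?_, ?_, ?_, ?_⟩
    · intro x hx
      exact ha.1 x (List.mem_of_mem_filter hx)
    · refine (pf_count_char u).mpr (fun i hi => ?_)
      rw [hulen] at hi
      have hcu : u.countP (fun x => decide (x ≤ i + 1)) =
          a.countP (fun x => decide (x ≤ i + 1)) := by
        rw [hud, List.countP_filter]
        refine List.countP_congr (fun x _ => ?_)
        simp only [Bool.and_eq_true, decide_eq_true_eq]
        omega
      rw [hcu]
      exact achar i (by omega)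
    · intro x hx
      obtain ⟨y, hy, rfl⟩ := List.mem_map.mp hx
      have := (List.mem_filter.mp hy).2
      simp only [decide_eq_true_eq] at this
      omega
    · refine (pf_count_char v).mpr (fun i hi => ?_)
      rw [hvlen] at hi
      have hc1 : v.countP (fun x => decide (x ≤ i + 1)) =
          a.countP (fun x => decide (x ≤ i + 1 + b) && decide (b < x)) := by
        rw [hvd, List.countP_map, hwd]
        rw [List.countP_congr (q := fun x => decide (x ≤ i + 1 + b)) (fun x _ => by
          simp only [Function.comp_apply, decide_eq_true_eq]
          omega)]
        exact List.countP_filter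
      have hsplit := countP_split_s3 a (fun x => decide (x ≤ b))
        (fun x => decide (x ≤ i + 1 + b))
      have h2 : a.countP (fun x => decide (x ≤ i + 1 + b) && decide (x ≤ b)) = b := by
        rw [List.countP_congr (q := fun x => decide (x ≤ b)) (fun x _ => by
          simp only [Bool.and_eq_true, decide_eq_true_eq]; omega), hbp]
      have h3 : a.countP (fun x => decide (x ≤ i + 1 + b) && !decide (x ≤ b)) =
          a.countP (fun x => decide (x ≤ i + 1 + b) && decide (b < x)) := by
        refine List.countP_congr (fun x _ => ?_)
        simp only [Bool.and_eq_true, Bool.not_eq_true', decide_eq_false_iff_not,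
          decide_eq_true_eq]
        omega
      have h4 : i + 1 + b ≤ a.countP (fun x => decide (x ≤ i + 1 + b)) := by
        have := achar (i + b) (by omega)
        have he : i + b + 1 = i + 1 + b := by omega
        rwa [he] at this
      omega
    · omega
    · omega
    · omega
    · have hshift : shiftW u.length v = w := by
        rw [hulen, hvd, shiftW, List.map_map]
        refine (List.map_congr_left (fun y hy => ?_)).trans (List.map_id w)
        have := (List.mem_filter.mp hy).2
        simp only [decide_eq_true_eq] at this
        simp only [Function.comp_apply, id_eq]
        omega
      have hw' : w = a.filter (fun x => !decide (x ≤ b)) := by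
        rw [hwd]
        refine List.filter_congr (fun x _ => ?_)
        by_cases h : x ≤ b <;> simp [h, Nat.not_le, Nat.lt_of_not_le]
      show a ∈ shuffles u (shiftW u.length v)
      rw [hshift, hw', hud]
      exact self_mem_shuffles_filter (fun x => decide (x ≤ b)) a
end

section
/- For all parking functions a, b, c of length n, the internal product a * b is again a parking function of length n, and the internal product is associative: (a*b)*c = a*(b*c). -/
open List

/-! ### Foundations: counts, dW, decAbove, park -/

/-- value of `w` at index `i` -/
abbrev wv (w : List ℕ) (i : ℕ) : ℕ := w.getD i 0

lemma wv_lt_length {w : List ℕ} {i : ℕ} (h : i < w.length) : wv w i = w[i] :=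
  List.getD_eq_getElem w 0 h

/-- count of letters `≤ t` -/
abbrev cLE (w : List ℕ) (t : ℕ) : ℕ := w.countP (fun x => decide (x ≤ t))
/-- count of letters `< t` -/
abbrev cLT (w : List ℕ) (t : ℕ) : ℕ := w.countP (fun x => decide (x < t))

lemma countP_split_s4 (w : List ℕ) (p q r : ℕ → Bool)
    (h : ∀ x ∈ w, (p x = (q x || r x)) ∧ ¬(q x = true ∧ r x = true)) :
    w.countP p = w.countP q + w.countP r := by
  induction w with
  | nil => simp
  | cons a t ih =>
    simp only [List.countP_cons]
    have ha := h a (by simp)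
    have ht := ih (fun x hx => h x (by simp [hx]))
    rcases hq : q a <;> rcases hr : r a <;> simp_all <;> omega

lemma cLT_succ (w : List ℕ) (t : ℕ) : cLT w (t+1) = cLE w t := by
  apply List.countP_congr; intro x _; simp [Nat.lt_succ_iff]

lemma cLE_mono (w : List ℕ) {s t : ℕ} (h : s ≤ t) : cLE w s ≤ cLE w t :=
  List.countP_mono_left (by intro x _ hx; simp at hx ⊢; omega)

lemma cLE_le_length (w : List ℕ) (t : ℕ) : cLE w t ≤ w.length :=
  List.countP_le_length

lemma dW_pos (w : List ℕ) : 1 ≤ dW w :=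
  (Nat.sInf_mem (⟨_, mem_dW_set w⟩ : Set.Nonempty _)).1

lemma dW_le (w : List ℕ) : dW w ≤ w.length + 1 := Nat.sInf_le (mem_dW_set w)

lemma dW_count_lt {w : List ℕ} : cLE w (dW w) < dW w :=
  (Nat.sInf_mem (⟨_, mem_dW_set w⟩ : Set.Nonempty _)).2

lemma dW_sat {w : List ℕ} {t : ℕ} (h1 : 1 ≤ t) (h2 : t < dW w) : t ≤ cLE w t := by
  by_contra hc
  push_neg at hc
  exact Nat.notMem_of_lt_sInf h2 ⟨h1, hc⟩

lemma dW_count_eq {w : List ℕ} (h1 : 1 ≤ dW w) :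
    cLE w (dW w) = dW w - 1 := by
  have h2 := dW_count_lt (w := w)
  rcases Nat.eq_or_lt_of_le h1 with h' | h'
  · omega
  · have := dW_sat (w := w) (t := dW w - 1) (by omega) (by omega)
    have := cLE_mono w (show dW w - 1 ≤ dW w by omega)
    omega

lemma dW_no_letter {w : List ℕ} : ∀ x ∈ w, x ≠ dW w := by
  intro x hx hxd
  have h1 := dW_pos w
  have hsplit : cLE w (dW w) = cLE w (dW w - 1) + w.countP (fun y => decide (y = dW w)) := by
    apply countP_split_s4
    intro y _
    constructor
    · rw [← Bool.decide_or, decide_eq_decide]; omega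
    · rintro ⟨hy1, hy2⟩; simp at hy1 hy2; omega
  have hone : 0 < w.countP (fun y => decide (y = dW w)) := by
    rw [List.countP_pos_iff]; exact ⟨x, hx, by simp [hxd]⟩
  have hsat : dW w - 1 ≤ cLE w (dW w - 1) := by
    rcases Nat.eq_or_lt_of_le h1 with h' | h'
    · omega
    · exact dW_sat (by omega) (by omega)
  have := dW_count_eq (w := w) h1
  have := dW_count_lt (w := w)
  omega
/-! ### decAbove and park basics -/

lemma decAbove_length (d : ℕ) (w : List ℕ) : (decAbove d w).length = w.length := by
  simp [decAbove]

lemma decAbove_wv {d : ℕ} {w : List ℕ} {i : ℕ} (h : i < w.length) :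
    wv (decAbove d w) i = if d < wv w i then wv w i - 1 else wv w i := by
  rw [wv_lt_length (by simpa [decAbove] using h), wv_lt_length h]
  simp [decAbove]

lemma decAbove_pos {d : ℕ} {w : List ℕ} (hd : 1 ≤ d) (hw : ∀ x ∈ w, 1 ≤ x) :
    ∀ x ∈ (decAbove d w), 1 ≤ x := by
  intro x hx
  simp only [decAbove, List.mem_map] at hx
  obtain ⟨y, hy, rfl⟩ := hx
  have := hw y hy
  split <;> omega

lemma decAbove_le {d : ℕ} {w : List ℕ} {t : ℕ} (hb : ∀ x ∈ w, x ≤ t) :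
    ∀ x ∈ (decAbove d w), x ≤ t := by
  intro x hx
  simp only [decAbove, List.mem_map] at hx
  obtain ⟨y, hy, rfl⟩ := hx
  have := hb y hy
  split <;> omega

/-- unfolding equation for park -/
lemma park_eq (w : List ℕ) :
    park w = if dW w = w.length + 1 then w else park (decAbove (dW w) w) := by
  rw [park]
  split <;> rfl

lemma park_length (w : List ℕ) : (park w).length = w.length := by
  generalize hs : w.sum = s
  induction s using Nat.strong_induction_on generalizing w with
  | _ s ih =>
    rw [park_eq]
    split
    · rfl
    · subst hs
      rw [ih _ (decAbove_sum_lt (by assumption)) _ rfl, decAbove_length]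

lemma park_pos {w : List ℕ} (hw : ∀ x ∈ w, 1 ≤ x) : ∀ x ∈ park w, 1 ≤ x := by
  generalize hs : w.sum = s
  induction s using Nat.strong_induction_on generalizing w with
  | _ s ih =>
    rw [park_eq]
    split
    · exact hw
    · subst hs
      exact ih _ (decAbove_sum_lt (by assumption)) (decAbove_pos (dW_pos w) hw) rfl

lemma park_parked (w : List ℕ) : dW (park w) = (park w).length + 1 := by
  generalize hs : w.sum = s
  induction s using Nat.strong_induction_on generalizing w with
  | _ s ih =>
    rw [park_eq]
    split
    · simpa [park_length] using (by assumption : dW w = w.length + 1)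
    · subst hs
      exact ih _ (decAbove_sum_lt (by assumption)) _ rfl

/-- a word `w` with `dW w = n+1` has all counts saturated -/
lemma parked_sat {w : List ℕ} (h : dW w = w.length + 1) {t : ℕ} (h1 : 1 ≤ t)
    (h2 : t ≤ w.length) : t ≤ cLE w t :=
  dW_sat h1 (by omega)

lemma parked_letter_le {w : List ℕ} (h : dW w = w.length + 1) (hlen : 1 ≤ w.length) :
    ∀ x ∈ w, x ≤ w.length := by
  intro x hx
  have hsat := parked_sat h (t := w.length) hlen le_rfl
  have : cLE w w.length = w.length :=
    le_antisymm (cLE_le_length _ _) hsat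
  rw [List.countP_eq_length] at this
  simpa using this x hx

/-- the sorted-characterization of the parking condition, via counts -/
lemma sorted_getD_iff_counts {s : List ℕ} (hs : List.Pairwise (fun a b => a ≤ b) s) :
    (∀ i, i < s.length → s.getD i 0 ≤ i + 1) ↔ (∀ t, 1 ≤ t → t ≤ s.length → t ≤ cLE s t) := by
  constructor
  · intro h t h1 h2
    have htake : List.countP (fun x => decide (x ≤ t)) (s.take t) = (s.take t).length := by
      rw [List.countP_eq_length]
      intro x hx
      rw [List.mem_iff_getElem] at hx
      obtain ⟨i, hi, rfl⟩ := hx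
      have hi2 : i < s.length := by
        have := List.length_take_le t s; omega
      have hit : i < t := by
        have : (s.take t).length = min t s.length := List.length_take
        omega
      have := h i hi2
      rw [List.getD_eq_getElem s 0 hi2] at this
      simp only [List.getElem_take]
      simp only [decide_eq_true_eq]
      omega
    have hlt : (s.take t).length = t := by
      have : (s.take t).length = min t s.length := List.length_take; omega
    have hsplit : cLE s t = List.countP (fun x => decide (x ≤ t)) (s.take t)
        + List.countP (fun x => decide (x ≤ t)) (s.drop t) := by
      show List.countP _ s = _
      rw [← List.countP_append, List.take_append_drop]
    omega
  · intro h i hi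
    by_contra hc
    push_neg at hc
    rw [List.getD_eq_getElem s 0 hi] at hc
    have hge : ∀ j, i ≤ j → (hj : j < s.length) → i + 1 < s[j] := by
      intro j hij hj
      have hpg := List.pairwise_iff_getElem.mp hs
      rcases Nat.eq_or_lt_of_le hij with rfl | hij'
      · omega
      · have := hpg i j hi hj hij'
        omega
    -- all elements ≤ i+1 are among the first i positions
    have hcnt : cLE s (i+1) ≤ i := by
      have hsplit : cLE s (i+1) = List.countP (fun x => decide (x ≤ i+1)) (s.take i)
          + List.countP (fun x => decide (x ≤ i+1)) (s.drop i) := by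
        show List.countP _ s = _
        rw [← List.countP_append, List.take_append_drop]
      have hdrop : List.countP (fun x => decide (x ≤ i+1)) (s.drop i) = 0 := by
        rw [List.countP_eq_zero]
        intro x hx
        rw [List.mem_iff_getElem] at hx
        obtain ⟨j, hj, rfl⟩ := hx
        have hj' : i + j < s.length := by
          have : (s.drop i).length = s.length - i := List.length_drop; omega
        rw [List.getElem_drop]
        have := hge (i+j) (by omega) hj'
        simp only [decide_eq_true_eq, Bool.not_eq_true, decide_eq_false_iff_not]
        omega
      have htk : List.countP (fun x => decide (x ≤ i+1)) (s.take i) ≤ i := by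
        have h1 := List.countP_le_length (l := s.take i) (p := fun x => decide (x ≤ i+1))
        have h2 := List.length_take_le i s
        omega
      omega
    have := h (i+1) (by omega) (by omega)
    omega

/-- IsPF in terms of counts -/
lemma isPF_iff_counts {w : List ℕ} :
    IsPF w ↔ ((∀ x ∈ w, 1 ≤ x) ∧ ∀ t, 1 ≤ t → t ≤ w.length → t ≤ cLE w t) := by
  unfold IsPF
  have hperm : (sortW w) ~ w := List.mergeSort_perm w _
  have hsorted : List.Pairwise (fun a b => a ≤ b) (sortW w) := by
    have := List.pairwise_mergeSort (le := fun a b : ℕ => decide (a ≤ b))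
      (fun a b c => by simp; omega) (fun a b => by simp; omega) w
    simpa [sortW] using this
  have hlen : (sortW w).length = w.length := hperm.length_eq
  have hcnt : ∀ t, cLE (sortW w) t = cLE w t := fun t => hperm.countP_eq _
  constructor
  · rintro ⟨h1, h2⟩
    refine ⟨h1, ?_⟩
    intro t ht1 ht2
    rw [← hcnt]
    exact (sorted_getD_iff_counts hsorted).mp (by simpa [hlen] using h2) t ht1 (by omega)
  · rintro ⟨h1, h2⟩
    refine ⟨h1, ?_⟩
    have := (sorted_getD_iff_counts hsorted).mpr (by intro t ht1 ht2; rw [hcnt]; exact h2 t ht1 (by omega))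
    intro i hi
    exact this i (by omega)

lemma isPF_iff_parked {w : List ℕ} (hpos : ∀ x ∈ w, 1 ≤ x) :
    IsPF w ↔ dW w = w.length + 1 := by
  rw [isPF_iff_counts]
  constructor
  · rintro ⟨-, h2⟩
    have h1 := dW_pos w
    have hle := dW_le w
    by_contra hc
    have := h2 (dW w) h1 (by omega)
    have := dW_count_lt (w := w)
    omega
  · intro h
    exact ⟨hpos, fun t h1 h2 => parked_sat h h1 h2⟩

lemma park_isPF {w : List ℕ} (hpos : ∀ x ∈ w, 1 ≤ x) : IsPF (park w) :=
  (isPF_iff_parked (park_pos hpos)).mpr (park_parked w)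

lemma isPF_letter_le {w : List ℕ} (h : IsPF w) : ∀ x ∈ w, x ≤ w.length := by
  intro x hx
  have hlen : 1 ≤ w.length := by
    cases w with
    | nil => simp at hx
    | cons a t => simp
  exact parked_letter_le ((isPF_iff_parked h.1).mp h) hlen x hx
/-! ### The explicit formula for parkization -/

lemma wv_mem {w : List ℕ} {i : ℕ} (h : i < w.length) : wv w i ∈ w := by
  rw [wv_lt_length h]; exact List.getElem_mem h

lemma countP_eq_countP_range (w : List ℕ) (p : ℕ → Bool) :
    w.countP p = (List.range w.length).countP (fun j => p (wv w j)) := by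
  induction w with
  | nil => simp
  | cons a t ih =>
    rw [List.length_cons, List.range_succ_eq_map, List.countP_cons, List.countP_cons,
      List.countP_map]
    have : ((fun j => p (wv (a :: t) j)) ∘ Nat.succ) = (fun j => p (wv t j)) := by
      funext j; simp [wv]
    rw [this, ← ih]
    simp [wv]

lemma countP_range_eq_card (n : ℕ) (p : ℕ → Bool) :
    (List.range n).countP p = ((Finset.range n).filter (fun j => p j = true)).card := by
  induction n with
  | zero => simp
  | succ m ih =>
    rw [List.range_succ, List.countP_append, Finset.range_add_one, Finset.filter_insert]
    by_cases hp : p m = true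
    · rw [if_pos hp, Finset.card_insert_of_notMem (by simp)]
      simp [ih, hp, List.countP_cons]
    · rw [if_neg hp]
      simp [ih, List.countP_cons, hp]

lemma countP_eq_card (w : List ℕ) (p : ℕ → Bool) :
    w.countP p = ((Finset.range w.length).filter (fun j => p (wv w j) = true)).card := by
  rw [countP_eq_countP_range, countP_range_eq_card]

lemma cLT_card (w : List ℕ) (t : ℕ) :
    cLT w t = ((Finset.range w.length).filter (fun j => wv w j < t)).card := by
  show w.countP _ = _
  rw [countP_eq_card]
  congr 1
  apply Finset.filter_congr
  intro j _
  simp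

/-- the candidate set: indices whose value is at most the value at `i` -/
def Si (w : List ℕ) (i : ℕ) : Finset ℕ :=
  (Finset.range w.length).filter (fun j => wv w j ≤ wv w i)

lemma mem_Si {w : List ℕ} {i j : ℕ} :
    j ∈ Si w i ↔ (j < w.length ∧ wv w j ≤ wv w i) := by
  simp [Si]

lemma Si_nonempty {w : List ℕ} {i : ℕ} (hi : i < w.length) : (Si w i).Nonempty :=
  ⟨i, mem_Si.mpr ⟨hi, le_rfl⟩⟩

/-- potential of index `j` -/
noncomputable def gP (w : List ℕ) (j : ℕ) : ℤ := (cLT w (wv w j) : ℤ) - (wv w j : ℤ)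

noncomputable def minP (w : List ℕ) (i : ℕ) : ℤ :=
  if h : (Si w i).Nonempty then (Si w i).inf' h (gP w) else 0

noncomputable def NwZ (w : List ℕ) (i : ℕ) : ℤ := (wv w i : ℤ) + 1 + minP w i

noncomputable def Nw (w : List ℕ) : List ℕ :=
  (List.range w.length).map (fun i => (NwZ w i).toNat)

lemma Nw_length (w : List ℕ) : (Nw w).length = w.length := by simp [Nw]

lemma Nw_wv {w : List ℕ} {i : ℕ} (hi : i < w.length) :
    wv (Nw w) i = (NwZ w i).toNat := by
  rw [wv_lt_length (by simpa [Nw] using hi)]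
  simp [Nw]

/-- the min-shift core lemma -/
lemma minShift {W : Finset ℕ} (hW : W.Nonempty) (g h : ℕ → ℤ) (hi : ℤ)
    (hA : ∀ j ∈ W, ∃ k ∈ W, g k + h k ≤ g j + hi)
    (hB : ∀ j ∈ W, ∃ k ∈ W, g k ≤ g j + h j - hi) :
    W.inf' hW (fun j => g j + h j) = W.inf' hW g + hi := by
  apply _root_.le_antisymm
  · obtain ⟨j₀, hj₀, hj₀eq⟩ := Finset.exists_mem_eq_inf' hW g
    obtain ⟨k, hk, hkle⟩ := hA j₀ hj₀
    calc W.inf' hW (fun j => g j + h j) ≤ g k + h k := Finset.inf'_le _ hk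
    _ ≤ g j₀ + hi := hkle
    _ = W.inf' hW g + hi := by rw [hj₀eq]
  · apply Finset.le_inf'
    intro j hj
    obtain ⟨k, hk, hkle⟩ := hB j hj
    have := Finset.inf'_le (s := W) g hk
    omega

/-- the central comparison lemma -/
lemma Nw_eq_core (w w' : List ℕ) (h : ℕ → ℤ)
    (hlen : w'.length = w.length)
    (hlt : ∀ i, i < w.length → ∀ j, j < w.length → (wv w' j < wv w' i ↔ wv w j < wv w i))
    (hle : ∀ i, i < w.length → ∀ j, j < w.length → (wv w' j ≤ wv w' i ↔ wv w j ≤ wv w i))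
    (hoff : ∀ i, i < w.length → (wv w' i : ℤ) = (wv w i : ℤ) - h i)
    (hA : ∀ i, i < w.length → ∀ j ∈ Si w i, ∃ k ∈ Si w i, gP w k + h k ≤ gP w j + h i)
    (hB : ∀ i, i < w.length → ∀ j ∈ Si w i, ∃ k ∈ Si w i, gP w k ≤ gP w j + h j - h i) :
    Nw w' = Nw w := by
  have hSi : ∀ i, i < w.length → Si w' i = Si w i := by
    intro i hi
    apply Finset.ext
    intro j
    rw [mem_Si, mem_Si, hlen]
    constructor
    · rintro ⟨hj, hj2⟩; exact ⟨hj, (hle i hi j hj).mp hj2⟩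
    · rintro ⟨hj, hj2⟩; exact ⟨hj, (hle i hi j hj).mpr hj2⟩
  have hg : ∀ j, j < w.length → gP w' j = gP w j + h j := by
    intro j hj
    have hcnt : cLT w' (wv w' j) = cLT w (wv w j) := by
      rw [cLT_card, cLT_card, hlen]
      congr 1
      apply Finset.filter_congr
      intro l hl
      rw [Finset.mem_range] at hl
      exact hlt j hj l hl
    unfold gP
    rw [hcnt, hoff j hj]
    ring
  have hN : ∀ i, i < w.length → NwZ w' i = NwZ w i := by
    intro i hi
    unfold NwZ minP
    rw [hSi i hi, dif_pos (Si_nonempty hi), dif_pos (Si_nonempty hi)]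
    have : (Si w i).inf' (Si_nonempty hi) (gP w') =
        (Si w i).inf' (Si_nonempty hi) (fun j => gP w j + h j) := by
      apply Finset.inf'_congr _ rfl
      intro j hj
      exact hg j (mem_Si.mp hj).1
    rw [this, minShift (Si_nonempty hi) (gP w) h (h i) (hA i hi) (hB i hi), hoff i hi]
    ring
  apply List.ext_getElem (by simp [Nw, hlen])
  intro i hi1 hi2
  have hi : i < w.length := by simpa [Nw, hlen] using hi1
  have e1 : (Nw w')[i] = wv (Nw w') i := (wv_lt_length hi1).symm
  have e2 : (Nw w)[i] = wv (Nw w) i := (wv_lt_length hi2).symm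
  rw [e1, e2, Nw_wv (by omega : i < w'.length), Nw_wv hi, hN i hi]

/-- a parked word equals its own formula -/
lemma Nw_of_parked {w : List ℕ} (hpos : ∀ x ∈ w, 1 ≤ x)
    (hparked : dW w = w.length + 1) : Nw w = w := by
  apply List.ext_getElem (by simp [Nw])
  intro i hi1 hi2
  have hi : i < w.length := by simpa [Nw] using hi1
  rw [← wv_lt_length hi1, ← wv_lt_length hi2, Nw_wv hi]
  have hone : ∃ j, j < w.length ∧ wv w j = 1 := by
    have hc : 0 < cLE w 1 := by
      have := parked_sat hparked (t := 1) le_rfl (by omega)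
      omega
    rw [List.countP_pos_iff] at hc
    obtain ⟨x, hx, hx1⟩ := hc
    simp only [decide_eq_true_eq] at hx1
    have := hpos x hx
    rw [List.mem_iff_getElem] at hx
    obtain ⟨j, hj, rfl⟩ := hx
    exact ⟨j, hj, by rw [wv_lt_length hj]; omega⟩
  obtain ⟨j1, hj1, hj1v⟩ := hone
  have hminle : minP w i ≤ -1 := by
    unfold minP
    rw [dif_pos (Si_nonempty hi)]
    have hj1S : j1 ∈ Si w i := by
      rw [mem_Si]
      exact ⟨hj1, by rw [hj1v]; exact hpos _ (wv_mem hi)⟩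
    calc (Si w i).inf' _ (gP w) ≤ gP w j1 := Finset.inf'_le _ hj1S
    _ = -1 := by
      unfold gP
      rw [hj1v]
      have : cLT w 1 = 0 := by
        rw [List.countP_eq_zero]
        intro x hx
        have := hpos x hx
        simp; omega
      rw [this]; ring
  have hminge : -1 ≤ minP w i := by
    unfold minP
    rw [dif_pos (Si_nonempty hi)]
    apply Finset.le_inf'
    intro j hj
    rw [mem_Si] at hj
    obtain ⟨hj, _⟩ := hj
    unfold gP
    have hwj : 1 ≤ wv w j := hpos _ (wv_mem hj)
    have hcnt : wv w j - 1 ≤ cLT w (wv w j) := by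
      rcases Nat.eq_or_lt_of_le hwj with h' | h'
      · omega
      · have hle' : wv w j ≤ w.length := parked_letter_le hparked (by omega) _ (wv_mem hj)
        have := parked_sat hparked (t := wv w j - 1) (by omega) (by omega)
        have : cLT w (wv w j) = cLE w (wv w j - 1) := by
          rw [← cLT_succ]
          congr 1
          omega
        omega
    omega
  have : minP w i = -1 := le_antisymm hminle hminge
  unfold NwZ
  rw [this]
  simp
/-! ### park equals the formula -/

lemma cLT_eq_cLE_pred (w : List ℕ) {t : ℕ} (h : 1 ≤ t) : cLT w t = cLE w (t-1) := by
  rw [← cLT_succ]; congr 1; omega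

lemma exists_min_wv {w : List ℕ} (P : ℕ → Prop) [DecidablePred P] {i0 : ℕ}
    (h0 : i0 < w.length ∧ P i0) :
    ∃ k, (k < w.length ∧ P k) ∧ ∀ l, l < w.length → P l → wv w k ≤ wv w l := by
  obtain ⟨k, hk, hmin⟩ := Finset.exists_min_image
    ((Finset.range w.length).filter (fun l => P l)) (wv w)
    ⟨i0, by simp [h0.1, h0.2]⟩
  simp only [Finset.mem_filter, Finset.mem_range] at hk
  exact ⟨k, hk, fun l hl hPl => hmin l (by simp [hl, hPl])⟩

lemma cLT_min_above {w : List ℕ} {d k : ℕ} (h1 : d < wv w k)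
    (h2 : ∀ x ∈ w, d < x → wv w k ≤ x) : cLT w (wv w k) = cLE w d := by
  apply List.countP_congr
  intro x hx
  simp only [decide_eq_true_eq]
  rcases le_or_gt x d with h | h
  · omega
  · have := h2 x hx h
    omega

lemma Nw_decAbove {w : List ℕ} (hpos : ∀ x ∈ w, 1 ≤ x) (hd : dW w ≠ w.length + 1) :
    Nw (decAbove (dW w) w) = Nw w := by
  set d := dW w with hdset
  have hd_le : d ≤ w.length := by have := dW_le w; omega
  have hd1 : 1 ≤ d := dW_pos w
  have hnol : ∀ x ∈ w, x ≠ d := dW_no_letter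
  have hlen := decAbove_length d w
  apply Nw_eq_core _ _ (fun j => if d < wv w j then 1 else 0) hlen
  · intro i hi j hj
    have hxi := hnol _ (wv_mem hi)
    have hxj := hnol _ (wv_mem hj)
    rw [decAbove_wv hi, decAbove_wv hj]
    split_ifs <;> omega
  · intro i hi j hj
    have hxi := hnol _ (wv_mem hi)
    have hxj := hnol _ (wv_mem hj)
    rw [decAbove_wv hi, decAbove_wv hj]
    split_ifs <;> omega
  · intro i hi
    rw [decAbove_wv hi]
    split_ifs <;> omega
  · intro i hi j hj
    refine ⟨j, hj, ?_⟩
    rw [mem_Si] at hj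
    have : wv w j ≤ wv w i := hj.2
    split_ifs <;> omega
  · intro i hi j hj
    rw [mem_Si] at hj
    obtain ⟨hjlt, hjle⟩ := hj
    by_cases hdi : d < wv w i
    · by_cases hdj : d < wv w j
      · exact ⟨j, mem_Si.mpr ⟨hjlt, hjle⟩, by split_ifs <;> omega⟩
      · -- the hard case : wv w j < d < wv w i
        have hxj := hnol _ (wv_mem hjlt)
        have hjltd : wv w j < d := by omega
        obtain ⟨k, ⟨hklt, hkP⟩, hkmin⟩ := exists_min_wv (w := w) (fun l => d < wv w l)
          ⟨hi, hdi⟩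
        have hkSi : k ∈ Si w i := mem_Si.mpr ⟨hklt, hkmin i hi hdi⟩
        refine ⟨k, hkSi, ?_⟩
        have hcntk : cLT w (wv w k) = cLE w d := by
          apply cLT_min_above hkP
          intro x hx hxd
          rw [List.mem_iff_getElem] at hx
          obtain ⟨l, hl, rfl⟩ := hx
          rw [← wv_lt_length hl] at hxd ⊢
          exact hkmin l hl hxd
        have hced : cLE w d = d - 1 := dW_count_eq hd1
        have hcntj : wv w j - 1 ≤ cLT w (wv w j) := by
          have hj1 : 1 ≤ wv w j := hpos _ (wv_mem hjlt)
          rcases Nat.eq_or_lt_of_le hj1 with h' | h'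
          · omega
          · rw [cLT_eq_cLE_pred w hj1]
            have := dW_sat (w := w) (t := wv w j - 1) (by omega) (by omega)
            omega
        unfold gP
        rw [hcntk, hced]
        split_ifs <;> omega
    · have hdj : ¬ d < wv w j := by omega
      exact ⟨j, mem_Si.mpr ⟨hjlt, hjle⟩, by split_ifs <;> omega⟩

lemma park_eq_Nw {w : List ℕ} (hpos : ∀ x ∈ w, 1 ≤ x) : park w = Nw w := by
  generalize hs : w.sum = s
  induction s using Nat.strong_induction_on generalizing w with
  | _ s ih =>
    rw [park_eq]
    split
    · exact (Nw_of_parked hpos (by assumption)).symm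
    · subst hs
      rw [ih _ (decAbove_sum_lt (by assumption)) (decAbove_pos (dW_pos w) hpos) rfl]
      exact Nw_decAbove hpos (by assumption)
/-! ### Encoded words -/

/-- lexicographic encoding with base `B` -/
def encW (B : ℕ) (a y : List ℕ) : List ℕ := List.zipWith (fun x z => (x - 1) * B + z) a y

lemma pairEnc_eq_encW (n : ℕ) (a b : List ℕ) : pairEnc n a b = encW n a b := rfl

lemma encW_length {B n : ℕ} {a y : List ℕ} (ha : a.length = n) (hy : y.length = n) :
    (encW B a y).length = n := by
  simp [encW, ha, hy]

lemma encW_wv {B n : ℕ} {a y : List ℕ} (ha : a.length = n) (hy : y.length = n)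
    {i : ℕ} (hi : i < n) :
    wv (encW B a y) i = (wv a i - 1) * B + wv y i := by
  rw [wv_lt_length (by rw [encW_length ha hy]; omega),
    wv_lt_length (by omega : i < a.length), wv_lt_length (by omega : i < y.length)]
  simp [encW]

lemma encW_pos {B : ℕ} {a y : List ℕ} (hy : ∀ x ∈ y, 1 ≤ x) :
    ∀ x ∈ encW B a y, 1 ≤ x := by
  intro x hx
  simp only [encW, List.mem_iff_getElem] at hx
  obtain ⟨i, hi, rfl⟩ := hx
  have hiy : i < y.length := by
    rw [List.length_zipWith] at hi; omega
  rw [List.getElem_zipWith]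
  have : y[i] ∈ y := List.getElem_mem _
  have := hy _ this
  omega

lemma encVal_le_iff {B x x' z z' : ℕ} (hx : 1 ≤ x) (hx' : 1 ≤ x')
    (hz1 : 1 ≤ z) (hzB : z ≤ B) (hz'1 : 1 ≤ z') (hz'B : z' ≤ B) :
    ((x - 1) * B + z ≤ (x' - 1) * B + z' ↔ (x < x' ∨ (x = x' ∧ z ≤ z'))) := by
  rcases Nat.lt_trichotomy x x' with h | h | h
  · have h1 : (x - 1) * B + z ≤ x * B := by
      have hxx : (x - 1) + 1 = x := by omega
      calc (x - 1) * B + z ≤ (x - 1) * B + B := by omega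
      _ = ((x - 1) + 1) * B := by rw [Nat.succ_mul]
      _ = x * B := by rw [hxx]
    have h2 : x * B ≤ (x' - 1) * B := Nat.mul_le_mul_right B (by omega)
    constructor
    · intro _; left; exact h
    · intro _; omega
  · subst h
    constructor
    · intro hle; right; exact ⟨rfl, by omega⟩
    · rintro (h | ⟨-, h⟩); · omega
      · omega
  · have h1 : (x' - 1) * B + z' ≤ x' * B := by
      have hxx : (x' - 1) + 1 = x' := by omega
      calc (x' - 1) * B + z' ≤ (x' - 1) * B + B := by omega
      _ = ((x' - 1) + 1) * B := by rw [Nat.succ_mul]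
      _ = x' * B := by rw [hxx]
    have h2 : x' * B ≤ (x - 1) * B := Nat.mul_le_mul_right B (by omega)
    constructor
    · intro hle; omega
    · rintro (h' | ⟨h', -⟩) <;> omega

lemma encVal_lt_iff {B x x' z z' : ℕ} (hx : 1 ≤ x) (hx' : 1 ≤ x')
    (hz1 : 1 ≤ z) (hzB : z ≤ B) (hz'1 : 1 ≤ z') (hz'B : z' ≤ B) :
    ((x - 1) * B + z < (x' - 1) * B + z' ↔ (x < x' ∨ (x = x' ∧ z < z'))) := by
  have h1 := encVal_le_iff (B := B) hx' hx hz'1 hz'B hz1 hzB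
  have h2 := encVal_le_iff (B := B) hx hx' hz1 hzB hz'1 hz'B
  constructor
  · intro hlt
    by_contra hc
    push_neg at hc
    have : (x' - 1) * B + z' ≤ (x - 1) * B + z := by
      rw [h1]; omega
    omega
  · intro hor
    have : ¬ ((x' - 1) * B + z' ≤ (x - 1) * B + z) := by
      rw [h1]; omega
    omega

/-- count interval split -/
lemma cLT_split {w : List ℕ} {t1 t2 : ℕ} (h : t1 ≤ t2) :
    cLT w t2 = cLT w t1 + w.countP (fun x => decide (t1 ≤ x) && decide (x < t2)) := by
  apply countP_split_s4
  intro x _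
  constructor
  · rw [← Bool.decide_and, ← Bool.decide_or, decide_eq_decide]
    omega
  · rintro ⟨h1, h2⟩
    simp only [Bool.and_eq_true, decide_eq_true_eq] at h1 h2
    omega

/-- transfer a count along parallel words -/
lemma countP_le_transfer {w w' : List ℕ} (hlen : w'.length = w.length)
    (p q : ℕ → Bool) (h : ∀ l, l < w.length → p (wv w l) = true → q (wv w' l) = true) :
    w.countP p ≤ w'.countP q := by
  rw [countP_eq_card, countP_eq_card, hlen]
  apply Finset.card_le_card
  intro l hl
  rw [Finset.mem_filter, Finset.mem_range] at hl ⊢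
  exact ⟨hl.1, h l hl.1 hl.2⟩

lemma cLT_ge_pred {w : List ℕ} {t : ℕ} (hlt : t < dW w) : t - 1 ≤ cLT w t := by
  rcases Nat.eq_zero_or_pos t with rfl | ht
  · omega
  · rw [cLT_eq_cLE_pred w ht]
    rcases Nat.eq_or_lt_of_le ht with h' | h'
    · omega
    · have := dW_sat (w := w) (t := t - 1) (by omega) (by omega)
      omega
/-! ### Transformation lemma: parkization step in the first slot -/

lemma T3step {n : ℕ} {u c : List ℕ} (hun : u.length = n) (hcn : c.length = n)
    (hupos : ∀ x ∈ u, 1 ≤ x) (hcpos : ∀ x ∈ c, 1 ≤ x) (hcle : ∀ x ∈ c, x ≤ n)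
    (hD : dW u ≠ u.length + 1) :
    Nw (encW n (decAbove (dW u) u) c) = Nw (encW n u c) := by
  set D := dW u with hDdef
  have hD1 : 1 ≤ D := dW_pos u
  have hDn : D ≤ n := by have := dW_le u; omega
  have hn1 : 1 ≤ n := by omega
  set u' := decAbove D u with hu'def
  have hu'n : u'.length = n := by rw [hu'def, decAbove_length]; exact hun
  have huv : ∀ i, i < n → (1 ≤ wv u i ∧ wv u i ≠ D) :=
    fun i hi => ⟨hupos _ (wv_mem (by omega)), dW_no_letter _ (wv_mem (by omega))⟩
  have hcv : ∀ i, i < n → (1 ≤ wv c i ∧ wv c i ≤ n) :=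
    fun i hi => ⟨hcpos _ (wv_mem (by omega)), hcle _ (wv_mem (by omega))⟩
  have hu'v : ∀ i, i < n →
      wv u' i = if D < wv u i then wv u i - 1 else wv u i :=
    fun i hi => decAbove_wv (by omega)
  set w := encW n u c with hwdef
  set w' := encW n u' c with hw'def
  have hwn : w.length = n := encW_length hun hcn
  have hw'n : w'.length = n := encW_length hu'n hcn
  have hwv : ∀ i, i < n → wv w i = (wv u i - 1) * n + wv c i :=
    fun i hi => encW_wv hun hcn hi
  have hw'v : ∀ i, i < n → wv w' i = (wv u' i - 1) * n + wv c i :=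
    fun i hi => encW_wv hu'n hcn hi
  have hu'pos : ∀ i, i < n → 1 ≤ wv u' i := by
    intro i hi
    rw [hu'v i hi]
    have := (huv i hi).1
    split <;> omega
  -- lex characterizations
  have hltw : ∀ i, i < n → ∀ j, j < n →
      (wv w j < wv w i ↔ (wv u j < wv u i ∨ (wv u j = wv u i ∧ wv c j < wv c i))) := by
    intro i hi j hj
    rw [hwv i hi, hwv j hj]
    exact encVal_lt_iff (huv j hj).1 (huv i hi).1 (hcv j hj).1 (hcv j hj).2 (hcv i hi).1 (hcv i hi).2
  have hlew : ∀ i, i < n → ∀ j, j < n →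
      (wv w j ≤ wv w i ↔ (wv u j < wv u i ∨ (wv u j = wv u i ∧ wv c j ≤ wv c i))) := by
    intro i hi j hj
    rw [hwv i hi, hwv j hj]
    exact encVal_le_iff (huv j hj).1 (huv i hi).1 (hcv j hj).1 (hcv j hj).2 (hcv i hi).1 (hcv i hi).2
  have hltw' : ∀ i, i < n → ∀ j, j < n →
      (wv w' j < wv w' i ↔ (wv u' j < wv u' i ∨ (wv u' j = wv u' i ∧ wv c j < wv c i))) := by
    intro i hi j hj
    rw [hw'v i hi, hw'v j hj]
    exact encVal_lt_iff (hu'pos j hj) (hu'pos i hi) (hcv j hj).1 (hcv j hj).2 (hcv i hi).1 (hcv i hi).2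
  have hlew' : ∀ i, i < n → ∀ j, j < n →
      (wv w' j ≤ wv w' i ↔ (wv u' j < wv u' i ∨ (wv u' j = wv u' i ∧ wv c j ≤ wv c i))) := by
    intro i hi j hj
    rw [hw'v i hi, hw'v j hj]
    exact encVal_le_iff (hu'pos j hj) (hu'pos i hi) (hcv j hj).1 (hcv j hj).2 (hcv i hi).1 (hcv i hi).2
  -- u' preserves the preorder of u
  have hu'lt : ∀ i, i < n → ∀ j, j < n → (wv u' j < wv u' i ↔ wv u j < wv u i) := by
    intro i hi j hj
    rw [hu'v i hi, hu'v j hj]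
    have h1 := (huv i hi); have h2 := (huv j hj)
    split_ifs <;> omega
  have hu'eq : ∀ i, i < n → ∀ j, j < n → (wv u' j = wv u' i ↔ wv u j = wv u i) := by
    intro i hi j hj
    rw [hu'v i hi, hu'v j hj]
    have h1 := (huv i hi); have h2 := (huv j hj)
    split_ifs <;> omega
  apply Nw_eq_core w w' (fun j => (n : ℤ) * (if D < wv u j then 1 else 0)) (by omega)
  · -- strict order preserved
    intro i hi j hj
    rw [hwn] at hi hj
    rw [hltw i hi j hj, hltw' i hi j hj, hu'lt i hi j hj, hu'eq i hi j hj]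
  · intro i hi j hj
    rw [hwn] at hi hj
    rw [hlew i hi j hj, hlew' i hi j hj, hu'lt i hi j hj, hu'eq i hi j hj]
  · -- value offset
    intro i hi
    rw [hwn] at hi
    rw [hwv i hi, hw'v i hi, hu'v i hi]
    have h1 := (huv i hi).1
    split_ifs with hcond
    · have h2 : 2 ≤ wv u i := by omega
      have hnat : (wv u i - 1 - 1) * n + n = (wv u i - 1) * n := by
        calc (wv u i - 1 - 1) * n + n = ((wv u i - 1 - 1) + 1) * n := (Nat.succ_mul _ _).symm
        _ = (wv u i - 1) * n := by congr 1; omega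
      push_cast [← hnat]
      ring
    · push_cast
      ring
  · -- condition A
    intro i hi j hjSi
    rw [hwn] at hi
    refine ⟨j, hjSi, ?_⟩
    rw [mem_Si, hwn] at hjSi
    obtain ⟨hj, hjle⟩ := hjSi
    have huji : wv u j ≤ wv u i := by
      rw [hlew i hi j hj] at hjle
      omega
    apply add_le_add_right
    apply mul_le_mul_of_nonneg_left _ (by positivity)
    split_ifs <;> omega
  · -- condition B
    intro i hi j hjSi
    rw [hwn] at hi
    have hjSi' := hjSi
    rw [mem_Si, hwn] at hjSi'
    obtain ⟨hj, hjle⟩ := hjSi'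
    by_cases hDi : D < wv u i
    · by_cases hDj : D < wv u j
      · refine ⟨j, hjSi, ?_⟩
        rw [if_pos hDi, if_pos hDj]
        omega
      · -- hard case
        have hujD : wv u j < D := by have := (huv j hj).2; omega
        obtain ⟨k, ⟨hkn, hkP⟩, hkmin⟩ := exists_min_wv (w := w) (fun l => l < n ∧ D < wv u l)
          (i0 := i) ⟨by omega, hi, hDi⟩
        rw [hwn] at hkn
        have hkSi : k ∈ Si w i := mem_Si.mpr ⟨by omega, hkmin i (by omega) ⟨hi, hDi⟩⟩
        refine ⟨k, hkSi, ?_⟩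
        have hDk : D < wv u k := hkP.2
        -- counting
        have hwjk : wv w j ≤ wv w k := by
          rw [hlew k hkn j hj]
          left; omega
        have hsplit : cLT w (wv w k) = cLT w (wv w j)
            + w.countP (fun x => decide (wv w j ≤ x) && decide (x < wv w k)) :=
          cLT_split hwjk
        set Mid := w.countP (fun x => decide (wv w j ≤ x) && decide (x < wv w k)) with hMid
        have hMid_le : Mid ≤ u.countP (fun x => decide (wv u j ≤ x) && decide (x < D)) := by
          rw [hMid]
          apply countP_le_transfer (by omega)
          intro l hl hpl
          rw [hwn] at hl
          simp only [Bool.and_eq_true, decide_eq_true_eq] at hpl ⊢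
          obtain ⟨hp1, hp2⟩ := hpl
          have hul : wv u j ≤ wv u l := by
            rw [hlew l hl j hj] at hp1; omega
          refine ⟨hul, ?_⟩
          by_contra hc
          push_neg at hc
          have hulD : D < wv u l := by have := (huv l hl).2; omega
          have := hkmin l (by omega) ⟨hl, hulD⟩
          omega
        have hcntu : u.countP (fun x => decide (wv u j ≤ x) && decide (x < D)) + cLT u (wv u j)
            = cLT u D := (cLT_split (by omega : wv u j ≤ D)).symm ▸ by omega
        have hcLTuD : cLT u D ≤ D - 1 := by
          rw [cLT_eq_cLE_pred u hD1]
          calc cLE u (D - 1) ≤ cLE u D := cLE_mono u (by omega)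
          _ = D - 1 := dW_count_eq hD1
        have hcLTuj : wv u j - 1 ≤ cLT u (wv u j) := cLT_ge_pred (by omega)
        have hMidD : Mid + wv u j ≤ D := by omega
        -- value inequality, in ℤ
        have hwkv := hwv k hkn
        have hwjv := hwv j hj
        have huj1 := (huv j hj).1
        have huk1 := (huv k hkn).1
        have hcj := hcv j hj
        have hck := hcv k hkn
        rw [if_pos hDi, if_neg hDj]
        unfold gP
        rw [hsplit, hwkv, hwjv]
        push_cast [Nat.cast_sub huj1, Nat.cast_sub huk1]
        have hZ1 : (0:ℤ) ≤ ((wv u k : ℤ) - 1 - D) * n :=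
          mul_nonneg (by push_cast; omega) (by positivity)
        have hZ2 : (0:ℤ) ≤ ((D : ℤ) - wv u j - 1) * ((n:ℤ) - 1) :=
          mul_nonneg (by push_cast; omega) (by push_cast; omega)
        have hMidZ : (Mid : ℤ) ≤ (D : ℤ) - wv u j := by push_cast; omega
        have hcjZ : (wv c j : ℤ) ≤ n := by push_cast; omega
        have hckZ : (1:ℤ) ≤ wv c k := by push_cast; omega
        have f1 : ((wv u k :ℤ) - 1) * n
            = ((wv u j :ℤ) - 1) * n + ((D:ℤ) - wv u j - 1) * n + 2 * n
              + ((wv u k :ℤ) - 1 - D) * n := by ring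
        have f2 : ((D:ℤ) - wv u j - 1) * n
            = ((D:ℤ) - wv u j - 1) + ((D:ℤ) - wv u j - 1) * ((n:ℤ) - 1) := by ring
        linarith [hZ1, hZ2, hMidZ, hcjZ, hckZ, f1, f2]
    · -- h i = 0 : easy, take k = j
      refine ⟨j, hjSi, ?_⟩
      rw [if_neg hDi]
      have : (0:ℤ) ≤ (n : ℤ) * (if D < wv u j then 1 else 0) := by
        split_ifs <;> simp <;> positivity
      linarith
/-! ### Transformation lemma: parkization step in the second slot, base `n²` -/

lemma countP_ge_split (y : List ℕ) (t : ℕ) :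
    y.length = cLT y t + y.countP (fun x => decide (t ≤ x)) := by
  have := countP_split_s4 y (fun _ => true) (fun x => decide (x < t)) (fun x => decide (t ≤ x))
    (by intro x _
        constructor
        · rcases le_or_gt t x with h | h
          · simp [h, Nat.not_lt.mpr h]
          · simp [h, Nat.not_le.mpr h]
        · rintro ⟨h1, h2⟩; simp at h1 h2; omega)
  simpa using this

lemma exists_block {n yj : ℕ} (h1 : 1 ≤ yj) (h2 : yj ≤ n * n) (hn : 1 ≤ n) :
    ∃ p, 1 ≤ p ∧ p ≤ n ∧ (p - 1) * n < yj ∧ yj ≤ p * n := by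
  obtain ⟨q, r, hqr, hrn⟩ : ∃ q r, n * q + r = yj - 1 ∧ r < n :=
    ⟨(yj - 1) / n, (yj - 1) % n, Nat.div_add_mod _ _, Nat.mod_lt _ (by omega)⟩
  have hcomm : q * n = n * q := Nat.mul_comm q n
  have hqn : q < n := by
    by_contra hc
    push_neg at hc
    have h7 : n * n ≤ n * q := Nat.mul_le_mul_left n hc
    omega
  refine ⟨q + 1, by omega, by omega, ?_, ?_⟩
  · have e4 : (q + 1 - 1) * n = q * n := by congr 1
    omega
  · have e3 : (q + 1) * n = q * n + n := by rw [Nat.succ_mul]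
    omega

lemma T2step {n : ℕ} {a y : List ℕ} (han : a.length = n) (hyn : y.length = n)
    (hapos : ∀ x ∈ a, 1 ≤ x) (hypos : ∀ x ∈ y, 1 ≤ x) (hyB : ∀ x ∈ y, x ≤ n * n)
    (hI : ∀ k, 1 ≤ k → k ≤ n → k ≤ cLE y (k * n))
    (hd : dW y ≠ y.length + 1) :
    Nw (encW (n * n) a (decAbove (dW y) y)) = Nw (encW (n * n) a y) := by
  set B := n * n with hBdef
  set d := dW y with hddef
  have hd1 : 1 ≤ d := dW_pos y
  have hdn : d ≤ n := by have := dW_le y; omega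
  have hn1 : 1 ≤ n := by omega
  have hnB : n ≤ B := by calc n = n * 1 := (Nat.mul_one n).symm
                          _ ≤ n * n := Nat.mul_le_mul_left n hn1
  set y' := decAbove d y with hy'def
  have hy'n : y'.length = n := by rw [hy'def, decAbove_length]; exact hyn
  have hyv : ∀ i, i < n → (1 ≤ wv y i ∧ wv y i ≤ B ∧ wv y i ≠ d) :=
    fun i hi => ⟨hypos _ (wv_mem (by omega)), hyB _ (wv_mem (by omega)),
      dW_no_letter _ (wv_mem (by omega))⟩
  have hav : ∀ i, i < n → 1 ≤ wv a i := fun i hi => hapos _ (wv_mem (by omega))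
  have hy'v : ∀ i, i < n → wv y' i = if d < wv y i then wv y i - 1 else wv y i :=
    fun i hi => decAbove_wv (by omega)
  have hy'r : ∀ i, i < n → (1 ≤ wv y' i ∧ wv y' i ≤ B) := by
    intro i hi
    rw [hy'v i hi]
    have := hyv i hi
    split <;> omega
  set w := encW B a y with hwdef
  set w' := encW B a y' with hw'def
  have hwn : w.length = n := encW_length han hyn
  have hw'n : w'.length = n := encW_length han hy'n
  have hwv : ∀ i, i < n → wv w i = (wv a i - 1) * B + wv y i :=
    fun i hi => encW_wv han hyn hi
  have hw'v : ∀ i, i < n → wv w' i = (wv a i - 1) * B + wv y' i :=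
    fun i hi => encW_wv han hy'n hi
  have hltw : ∀ i, i < n → ∀ j, j < n →
      (wv w j < wv w i ↔ (wv a j < wv a i ∨ (wv a j = wv a i ∧ wv y j < wv y i))) := by
    intro i hi j hj
    rw [hwv i hi, hwv j hj]
    exact encVal_lt_iff (hav j hj) (hav i hi) (hyv j hj).1 (hyv j hj).2.1 (hyv i hi).1 (hyv i hi).2.1
  have hlew : ∀ i, i < n → ∀ j, j < n →
      (wv w j ≤ wv w i ↔ (wv a j < wv a i ∨ (wv a j = wv a i ∧ wv y j ≤ wv y i))) := by
    intro i hi j hj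
    rw [hwv i hi, hwv j hj]
    exact encVal_le_iff (hav j hj) (hav i hi) (hyv j hj).1 (hyv j hj).2.1 (hyv i hi).1 (hyv i hi).2.1
  have hltw' : ∀ i, i < n → ∀ j, j < n →
      (wv w' j < wv w' i ↔ (wv a j < wv a i ∨ (wv a j = wv a i ∧ wv y' j < wv y' i))) := by
    intro i hi j hj
    rw [hw'v i hi, hw'v j hj]
    exact encVal_lt_iff (hav j hj) (hav i hi) (hy'r j hj).1 (hy'r j hj).2 (hy'r i hi).1 (hy'r i hi).2
  have hlew' : ∀ i, i < n → ∀ j, j < n →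
      (wv w' j ≤ wv w' i ↔ (wv a j < wv a i ∨ (wv a j = wv a i ∧ wv y' j ≤ wv y' i))) := by
    intro i hi j hj
    rw [hw'v i hi, hw'v j hj]
    exact encVal_le_iff (hav j hj) (hav i hi) (hy'r j hj).1 (hy'r j hj).2 (hy'r i hi).1 (hy'r i hi).2
  have hy'lt : ∀ i, i < n → ∀ j, j < n → (wv y' j < wv y' i ↔ wv y j < wv y i) := by
    intro i hi j hj
    rw [hy'v i hi, hy'v j hj]
    have h1 := (hyv i hi).2.2; have h2 := (hyv j hj).2.2
    split_ifs <;> omega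
  have hy'le : ∀ i, i < n → ∀ j, j < n → (wv y' j ≤ wv y' i ↔ wv y j ≤ wv y i) := by
    intro i hi j hj
    rw [hy'v i hi, hy'v j hj]
    have h1 := (hyv i hi).2.2; have h2 := (hyv j hj).2.2
    split_ifs <;> omega
  -- the count bound used in case B : letters of the `a_j`-class window
  have hMidBound : ∀ j, j < n → wv y j < d →
      cLT y d ≤ d - 1 ∧ wv y j - 1 ≤ cLT y (wv y j) ∧
      y.countP (fun x => decide (wv y j ≤ x) && decide (x < d)) + wv y j ≤ d := by
    intro j hj hyjd
    have e1 : cLT y d ≤ d - 1 := by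
      rw [cLT_eq_cLE_pred y hd1]
      calc cLE y (d - 1) ≤ cLE y d := cLE_mono y (by omega)
      _ = d - 1 := dW_count_eq hd1
    have e2 : wv y j - 1 ≤ cLT y (wv y j) := cLT_ge_pred (by omega)
    have e3 := cLT_split (w := y) (show wv y j ≤ d by omega)
    exact ⟨e1, e2, by omega⟩
  apply Nw_eq_core w w' (fun j => if d < wv y j then (1:ℤ) else 0) (by omega)
  · intro i hi j hj
    rw [hwn] at hi hj
    rw [hltw i hi j hj, hltw' i hi j hj, hy'lt i hi j hj]
  · intro i hi j hj
    rw [hwn] at hi hj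
    rw [hlew i hi j hj, hlew' i hi j hj, hy'le i hi j hj]
  · intro i hi
    rw [hwn] at hi
    rw [hwv i hi, hw'v i hi, hy'v i hi]
    have h1 := (hyv i hi).1
    split_ifs with hcond <;> push_cast <;> omega
  · -- condition A
    intro i hi j hjSi
    rw [hwn] at hi
    have hjSi' := hjSi
    rw [mem_Si, hwn] at hjSi'
    obtain ⟨hj, hjle⟩ := hjSi'
    by_cases hdi : d < wv y i
    · refine ⟨j, hjSi, ?_⟩
      apply add_le_add_right
      rw [if_pos hdi]
      split_ifs <;> omega
    · by_cases hdj : d < wv y j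
      · -- hard A case : y_i < d < y_j, hence a_j < a_i
        have haji : wv a j < wv a i := by
          rw [hlew i hi j hj] at hjle
          omega
        obtain ⟨k, ⟨hkn', hkcl⟩, hkmin⟩ := exists_min_wv (w := w)
          (fun l => l < n ∧ wv a l = wv a i) (i0 := i) ⟨by omega, hi, rfl⟩
        have hkn : k < n := hkcl.1
        have hka : wv a k = wv a i := hkcl.2
        have hkSi : k ∈ Si w i := mem_Si.mpr ⟨by omega, hkmin i (by omega) ⟨hi, rfl⟩⟩
        refine ⟨k, hkSi, ?_⟩
        rw [if_neg hdi]
        have hwjk : wv w j ≤ wv w k := by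
          rw [hlew k hkn j hj]; left; omega
        have hsplit : cLT w (wv w k) = cLT w (wv w j)
            + w.countP (fun x => decide (wv w j ≤ x) && decide (x < wv w k)) :=
          cLT_split hwjk
        set Mid := w.countP (fun x => decide (wv w j ≤ x) && decide (x < wv w k)) with hMiddef
        have hkh : (if d < wv y k then (1:ℤ) else 0) ≤ (wv y k : ℤ) - 1 := by
          have := (hyv k hkn).1
          split_ifs <;> push_cast <;> omega
        have hBz : ((B:ℕ) : ℤ) = (n:ℤ) * n := by rw [hBdef]; push_cast; ring
        rcases Nat.lt_or_ge (wv a j + 1) (wv a i) with hΔ2 | hΔ1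
        · -- a_i - a_j ≥ 2 : crude bound
          have hMn : Mid ≤ n := by
            rw [hMiddef]
            calc w.countP _ ≤ w.length := List.countP_le_length
            _ = n := hwn
          have hprodn : (wv a j + 1) * B ≤ (wv a i - 1) * B :=
            Nat.mul_le_mul_right B (by omega)
          have hzc : ((wv a j : ℤ) + 1) * B ≤ ((wv a i : ℤ) - 1) * B := by
            have := (Nat.cast_le (α := ℤ)).mpr hprodn
            push_cast [Nat.cast_sub (hav i hi)] at this
            linarith [this]
          unfold gP
          rw [hsplit, hwv j hj, hwv k hkn, hka]
          have hyj := hyv j hj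
          have hyk := hyv k hkn
          have hBnz : (n:ℤ) ≤ (B : ℤ) := by exact_mod_cast hnB
          have hMz : (Mid : ℤ) ≤ n := by exact_mod_cast hMn
          have hyjz : (wv y j : ℤ) ≤ (B:ℤ) := by exact_mod_cast hyj.2.1
          have hykz : (1:ℤ) ≤ (wv y k : ℤ) := by exact_mod_cast hyk.1
          push_cast [Nat.cast_sub (hav j hj), Nat.cast_sub (hav i hi)]
          have hid2 : ((wv a j : ℤ) + 1) * B = ((wv a j : ℤ) - 1) * B + 2 * B := by ring
          linarith [hkh, hzc, hid2, hMz, hyjz, hykz, hBnz]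
        · -- a_i = a_j + 1
          have haeq : wv a i = wv a j + 1 := by omega
          have hMid_le : Mid ≤ y.countP (fun x => decide (wv y j ≤ x)) := by
            rw [hMiddef]
            apply countP_le_transfer (by omega)
            intro l hl hpl
            rw [hwn] at hl
            simp only [Bool.and_eq_true, decide_eq_true_eq] at hpl ⊢
            obtain ⟨hp1, hp2⟩ := hpl
            rw [hlew l hl j hj] at hp1
            rw [hltw k hkn l hl] at hp2
            rw [hka] at hp2
            rcases hp2 with hp2 | ⟨hp2e, hp2y⟩
            · rcases hp1 with hp1 | ⟨hp1e, hp1y⟩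
              · omega
              · omega
            · exfalso
              have := hkmin l (by omega) ⟨hl, hp2e⟩
              rw [hlew l hl k hkn, hka, hp2e] at this
              omega
          have hcompl := countP_ge_split y (wv y j)
          obtain ⟨p, hp1, hpn, hplt, hple⟩ :=
            exists_block (hyv j hj).1 (by have := (hyv j hj).2.1; omega) hn1
          have hclow : p - 1 ≤ cLT y (wv y j) := by
            rcases Nat.eq_or_lt_of_le hp1 with h' | h'
            · omega
            · have hIp := hI (p-1) (by omega) (by omega)
              calc p - 1 ≤ cLE y ((p-1) * n) := hIp
              _ ≤ cLT y (wv y j) := List.countP_mono_left (by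
                  intro x _ hx
                  simp only [decide_eq_true_eq] at hx ⊢
                  omega)
          have haiB : (wv a i - 1) * B = (wv a j - 1) * B + B := by
            have h5 : wv a i - 1 = (wv a j - 1) + 1 := by have := hav j hj; omega
            rw [h5, Nat.add_mul]
            omega
          unfold gP
          rw [hsplit, hwv j hj, hwv k hkn, hka, haiB]
          have hyj := hyv j hj
          have hMz : (Mid : ℤ) + (cLT y (wv y j) : ℤ) ≤ n := by
            have h6 := cLE_le_length y (0)
            push_cast
            omega
          have hpz : ((p:ℤ) - 1) ≤ (cLT y (wv y j) : ℤ) := by push_cast; omega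
          have hyjz : (wv y j : ℤ) ≤ (p : ℤ) * n := by
            have : ((wv y j :ℕ) : ℤ) ≤ ((p * n : ℕ) : ℤ) := by exact_mod_cast hple
            push_cast at this
            linarith [this]
          have hZ2 : (0:ℤ) ≤ ((n:ℤ) - p) * ((n:ℤ) - 1) :=
            mul_nonneg (by push_cast; omega) (by push_cast; omega)
          have hid : ((n:ℤ) - p) * ((n:ℤ) - 1) = (n:ℤ)*n - (p:ℤ)*n - n + p := by ring
          push_cast
          linarith [hkh, hMz, hpz, hyjz, hBz, hZ2, hid]
      · refine ⟨j, hjSi, ?_⟩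
        rw [if_neg hdi, if_neg hdj]
  · -- condition B
    intro i hi j hjSi
    rw [hwn] at hi
    have hjSi' := hjSi
    rw [mem_Si, hwn] at hjSi'
    obtain ⟨hj, hjle⟩ := hjSi'
    by_cases hdi : d < wv y i
    · by_cases hdj : d < wv y j
      · refine ⟨j, hjSi, ?_⟩
        rw [if_pos hdi, if_pos hdj]
        omega
      · -- hard B case : y_j < d < y_i
        have hyjd : wv y j < d := by have := (hyv j hj).2.2; omega
        obtain ⟨e1, e2, e3⟩ := hMidBound j hj hyjd
        by_cases hs1 : ∃ l, l < n ∧ wv a l = wv a j ∧ d < wv y l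
        · -- within the class of a_j
          obtain ⟨l0, hl0n, hl0a, hl0d⟩ := hs1
          obtain ⟨k, ⟨hkn', hkcl⟩, hkmin⟩ := exists_min_wv (w := w)
            (fun l => l < n ∧ wv a l = wv a j ∧ d < wv y l) (i0 := l0) ⟨by omega, hl0n, hl0a, hl0d⟩
          have hkn : k < n := hkcl.1
          have hka : wv a k = wv a j := hkcl.2.1
          have hkd : d < wv y k := hkcl.2.2
          have hkSi : k ∈ Si w i := by
            rw [mem_Si]
            refine ⟨by omega, ?_⟩
            rw [hlew i hi k hkn]
            have hji : wv a j < wv a i ∨ (wv a j = wv a i ∧ wv y j ≤ wv y i) := by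
              rw [hlew i hi j hj] at hjle; exact hjle
            rcases hji with hlt | ⟨heq, -⟩
            · left; omega
            · right
              refine ⟨by omega, ?_⟩
              have := hkmin i (by omega) ⟨hi, by omega, hdi⟩
              rw [hlew i hi k hkn] at this
              omega
          refine ⟨k, hkSi, ?_⟩
          rw [if_pos hdi, if_neg hdj]
          have hwjk : wv w j ≤ wv w k := by
            rw [hlew k hkn j hj]; right; exact ⟨by omega, by omega⟩
          have hsplit : cLT w (wv w k) = cLT w (wv w j)
              + w.countP (fun x => decide (wv w j ≤ x) && decide (x < wv w k)) :=
            cLT_split hwjk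
          set Mid := w.countP (fun x => decide (wv w j ≤ x) && decide (x < wv w k)) with hMiddef
          have hMid_le : Mid ≤ y.countP (fun x => decide (wv y j ≤ x) && decide (x < d)) := by
            rw [hMiddef]
            apply countP_le_transfer (by omega)
            intro l hl hpl
            rw [hwn] at hl
            simp only [Bool.and_eq_true, decide_eq_true_eq] at hpl ⊢
            obtain ⟨hp1, hp2⟩ := hpl
            rw [hlew l hl j hj] at hp1
            rw [hltw k hkn l hl, hka] at hp2
            rcases hp2 with hp2 | ⟨hp2e, hp2y⟩
            · rcases hp1 with hp1 | ⟨hp1e, hp1y⟩ <;> omega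
            · rcases hp1 with hp1 | ⟨hp1e, hp1y⟩
              · omega
              · -- a_l = a_j, y_j ≤ y_l < y_k : so y_l ≤ d and y_l ≠ d
                refine ⟨hp1y, ?_⟩
                by_contra hc
                push_neg at hc
                have hld : d < wv y l := by
                  have := (hyv l hl).2.2; omega
                have := hkmin l (by omega) ⟨hl, by omega, hld⟩
                rw [hlew l hl k hkn, hka] at this
                omega
          unfold gP
          rw [hsplit, hwv j hj, hwv k hkn, hka]
          have hyj := hyv j hj
          have hMz : (Mid : ℤ) + wv y j ≤ d := by push_cast; omega
          have hykz : (d:ℤ) + 1 ≤ wv y k := by push_cast; omega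
          push_cast
          linarith [hMz, hykz]
        · -- no letter of class a_j above d : go to the next class
          push_neg at hs1
          have haji : wv a j < wv a i := by
            rw [hlew i hi j hj] at hjle
            rcases hjle with h' | ⟨he, hy'⟩
            · exact h'
            · exfalso; exact absurd hdi (by have := hs1 i hi he.symm; omega)
          obtain ⟨k, ⟨hkn', hkcl⟩, hkmin⟩ := exists_min_wv (w := w)
            (fun l => l < n ∧ wv a j < wv a l) (i0 := i) ⟨by omega, hi, haji⟩
          have hkn : k < n := hkcl.1
          have hka : wv a j < wv a k := hkcl.2
          have hkSi : k ∈ Si w i := mem_Si.mpr ⟨by omega, hkmin i (by omega) ⟨hi, haji⟩⟩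
          refine ⟨k, hkSi, ?_⟩
          rw [if_pos hdi, if_neg hdj]
          have hwjk : wv w j ≤ wv w k := by
            rw [hlew k hkn j hj]; left; omega
          have hsplit : cLT w (wv w k) = cLT w (wv w j)
              + w.countP (fun x => decide (wv w j ≤ x) && decide (x < wv w k)) :=
            cLT_split hwjk
          set Mid := w.countP (fun x => decide (wv w j ≤ x) && decide (x < wv w k)) with hMiddef
          have hMid_le : Mid ≤ y.countP (fun x => decide (wv y j ≤ x) && decide (x < d)) := by
            rw [hMiddef]
            apply countP_le_transfer (by omega)
            intro l hl hpl
            rw [hwn] at hl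
            simp only [Bool.and_eq_true, decide_eq_true_eq] at hpl ⊢
            obtain ⟨hp1, hp2⟩ := hpl
            rw [hlew l hl j hj] at hp1
            have hala : wv a l = wv a j := by
              rcases hp1 with hp1 | ⟨hp1e, -⟩
              · exfalso
                have := hkmin l (by omega) ⟨hl, hp1⟩
                omega
              · omega
            have hyl : wv y j ≤ wv y l := by
              rcases hp1 with hp1 | ⟨-, hp1y⟩
              · omega
              · exact hp1y
            refine ⟨hyl, ?_⟩
            have := hs1 l hl hala
            have := (hyv l hl).2.2
            omega
          -- (a_k - 1) * B ≥ (a_j - 1) * B + B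
          have hprod : (wv a j - 1 + 1) * B = (wv a j - 1) * B + B := by rw [Nat.add_mul]; omega
          have hstep : (wv a j - 1) * B + B ≤ (wv a k - 1) * B := by
            rw [← hprod]
            exact Nat.mul_le_mul_right B (by have := hav j hj; omega)
          unfold gP
          rw [hsplit, hwv j hj, hwv k hkn]
          have hyj := hyv j hj
          have hyk := hyv k hkn
          have hMz : (Mid : ℤ) + wv y j ≤ d := by push_cast; omega
          have hstepz : ((wv a j - 1 : ℕ) : ℤ) * B + B ≤ ((wv a k - 1 : ℕ) : ℤ) * B := by
            exact_mod_cast hstep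
          have hBz : (n:ℤ) ≤ B := by push_cast; omega
          have hdz : (d:ℤ) ≤ n := by push_cast; omega
          push_cast
          linarith [hMz, hstepz, hBz, hdz]
    · refine ⟨j, hjSi, ?_⟩
      rw [if_neg hdi]
      have : (0:ℤ) ≤ (if d < wv y j then (1:ℤ) else 0) := by split_ifs <;> omega
      linarith
/-! ### Transformation lemma: base reduction -/

lemma T1step {n B : ℕ} {a q : List ℕ} (han : a.length = n) (hqn : q.length = n)
    (hapos : ∀ x ∈ a, 1 ≤ x) (hale : ∀ x ∈ a, x ≤ n)
    (hqpos : ∀ x ∈ q, 1 ≤ x) (hqle : ∀ x ∈ q, x ≤ n)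
    (hqsat : ∀ t, 1 ≤ t → t ≤ n → t ≤ cLE q t)
    (hnB : n ≤ B) (hn1 : 1 ≤ n) :
    Nw (encW B a q) = Nw (encW (B+1) a q) := by
  have hav : ∀ i, i < n → (1 ≤ wv a i ∧ wv a i ≤ n) :=
    fun i hi => ⟨hapos _ (wv_mem (by omega)), hale _ (wv_mem (by omega))⟩
  have hqv : ∀ i, i < n → (1 ≤ wv q i ∧ wv q i ≤ n) :=
    fun i hi => ⟨hqpos _ (wv_mem (by omega)), hqle _ (wv_mem (by omega))⟩
  set w := encW (B+1) a q with hwdef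
  set w' := encW B a q with hw'def
  have hwn : w.length = n := encW_length han hqn
  have hw'n : w'.length = n := encW_length han hqn
  have hwv : ∀ i, i < n → wv w i = (wv a i - 1) * (B+1) + wv q i :=
    fun i hi => encW_wv han hqn hi
  have hw'v : ∀ i, i < n → wv w' i = (wv a i - 1) * B + wv q i :=
    fun i hi => encW_wv han hqn hi
  have hltw : ∀ i, i < n → ∀ j, j < n →
      (wv w j < wv w i ↔ (wv a j < wv a i ∨ (wv a j = wv a i ∧ wv q j < wv q i))) := by
    intro i hi j hj
    rw [hwv i hi, hwv j hj]
    exact encVal_lt_iff (hav j hj).1 (hav i hi).1 (hqv j hj).1 (by have := (hqv j hj).2; omega)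
      (hqv i hi).1 (by have := (hqv i hi).2; omega)
  have hlew : ∀ i, i < n → ∀ j, j < n →
      (wv w j ≤ wv w i ↔ (wv a j < wv a i ∨ (wv a j = wv a i ∧ wv q j ≤ wv q i))) := by
    intro i hi j hj
    rw [hwv i hi, hwv j hj]
    exact encVal_le_iff (hav j hj).1 (hav i hi).1 (hqv j hj).1 (by have := (hqv j hj).2; omega)
      (hqv i hi).1 (by have := (hqv i hi).2; omega)
  have hltw' : ∀ i, i < n → ∀ j, j < n →
      (wv w' j < wv w' i ↔ (wv a j < wv a i ∨ (wv a j = wv a i ∧ wv q j < wv q i))) := by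
    intro i hi j hj
    rw [hw'v i hi, hw'v j hj]
    exact encVal_lt_iff (hav j hj).1 (hav i hi).1 (hqv j hj).1 (by have := (hqv j hj).2; omega)
      (hqv i hi).1 (by have := (hqv i hi).2; omega)
  have hlew' : ∀ i, i < n → ∀ j, j < n →
      (wv w' j ≤ wv w' i ↔ (wv a j < wv a i ∨ (wv a j = wv a i ∧ wv q j ≤ wv q i))) := by
    intro i hi j hj
    rw [hw'v i hi, hw'v j hj]
    exact encVal_le_iff (hav j hj).1 (hav i hi).1 (hqv j hj).1 (by have := (hqv j hj).2; omega)
      (hqv i hi).1 (by have := (hqv i hi).2; omega)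
  apply Nw_eq_core w w' (fun j => (wv a j : ℤ) - 1) (by omega)
  · intro i hi j hj
    rw [hwn] at hi hj
    rw [hltw i hi j hj, hltw' i hi j hj]
  · intro i hi j hj
    rw [hwn] at hi hj
    rw [hlew i hi j hj, hlew' i hi j hj]
  · intro i hi
    rw [hwn] at hi
    rw [hwv i hi, hw'v i hi]
    have hmulsucc : (wv a i - 1) * (B + 1) = (wv a i - 1) * B + (wv a i - 1) := Nat.mul_succ _ _
    have h1 := (hav i hi).1
    rw [hmulsucc]
    push_cast
    omega
  · -- condition A : take k = j
    intro i hi j hjSi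
    rw [hwn] at hi
    refine ⟨j, hjSi, ?_⟩
    have hjSi' := hjSi
    rw [mem_Si, hwn] at hjSi'
    obtain ⟨hj, hjle⟩ := hjSi'
    have haji : wv a j ≤ wv a i := by
      rw [hlew i hi j hj] at hjle
      omega
    apply add_le_add_right
    have : (wv a j : ℤ) ≤ wv a i := by exact_mod_cast haji
    linarith
  · -- condition B
    intro i hi j hjSi
    rw [hwn] at hi
    have hjSi' := hjSi
    rw [mem_Si, hwn] at hjSi'
    obtain ⟨hj, hjle⟩ := hjSi'
    rcases Nat.lt_or_ge (wv a j) (wv a i) with haji | haji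
    · -- a_j < a_i : need a witness in the top class
      obtain ⟨k, ⟨hkn', hkcl⟩, hkmin⟩ := exists_min_wv (w := w)
        (fun l => l < n ∧ wv a l = wv a i) (i0 := i) ⟨by omega, hi, rfl⟩
      have hkn : k < n := hkcl.1
      have hka : wv a k = wv a i := hkcl.2
      have hkSi : k ∈ Si w i := mem_Si.mpr ⟨by omega, hkmin i (by omega) ⟨hi, rfl⟩⟩
      refine ⟨k, hkSi, ?_⟩
      have hwjk : wv w j ≤ wv w k := by
        rw [hlew k hkn j hj]; left; omega
      have hsplit : cLT w (wv w k) = cLT w (wv w j)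
          + w.countP (fun x => decide (wv w j ≤ x) && decide (x < wv w k)) :=
        cLT_split hwjk
      set Mid := w.countP (fun x => decide (wv w j ≤ x) && decide (x < wv w k)) with hMiddef
      have haz : (wv a j : ℤ) + 1 ≤ (wv a i : ℤ) := by exact_mod_cast haji
      rcases Nat.lt_or_ge (wv a j + 1) (wv a i) with hΔ2 | hΔ1
      · -- Δ ≥ 2, crude bound
        have hMn : Mid ≤ n := by
          rw [hMiddef]
          calc w.countP _ ≤ w.length := List.countP_le_length
          _ = n := hwn
        unfold gP
        rw [hsplit, hwv j hj, hwv k hkn, hka]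
        have hqj := hqv j hj
        have hqk := hqv k hkn
        have hai := hav i hi
        have haj := hav j hj
        have hMz : (Mid : ℤ) ≤ n := by exact_mod_cast hMn
        have hqjz : (wv q j : ℤ) ≤ n := by exact_mod_cast hqj.2
        have hqkz : (1:ℤ) ≤ (wv q k : ℤ) := by exact_mod_cast hqk.1
        have hBz : (n:ℤ) ≤ B := by exact_mod_cast hnB
        have hd2z : (2:ℤ) ≤ (wv a i : ℤ) - (wv a j : ℤ) := by
          have : wv a j + 2 ≤ wv a i := by omega
          have := (Nat.cast_le (α := ℤ)).mpr this
          push_cast at this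
          linarith
        have e1 : ((wv a i : ℤ) - 1) * ((B:ℤ)+1)
            = ((wv a j : ℤ) - 1) * ((B:ℤ)+1) + ((wv a i : ℤ) - wv a j) * ((B:ℤ)+1) := by ring
        have e3 : ((wv a i : ℤ) - wv a j) * ((B:ℤ)+1)
            = ((wv a i : ℤ) - wv a j) * (B:ℤ) + ((wv a i : ℤ) - wv a j) := by ring
        have e4 : 2 * (B:ℤ) ≤ ((wv a i : ℤ) - wv a j) * (B:ℤ) :=
          mul_le_mul_of_nonneg_right hd2z (by positivity)
        push_cast [Nat.cast_sub hai.1, Nat.cast_sub haj.1]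
        linarith [e1, e3, e4, hMz, hqjz, hqkz, hBz]
      · -- Δ = 1
        have haeq : wv a i = wv a j + 1 := by omega
        have hMid_le : Mid ≤ q.countP (fun x => decide (wv q j ≤ x)) := by
          rw [hMiddef]
          apply countP_le_transfer (by omega)
          intro l hl hpl
          rw [hwn] at hl
          simp only [Bool.and_eq_true, decide_eq_true_eq] at hpl ⊢
          obtain ⟨hp1, hp2⟩ := hpl
          rw [hlew l hl j hj] at hp1
          rw [hltw k hkn l hl, hka] at hp2
          rcases hp2 with hp2 | ⟨hp2e, hp2y⟩
          · rcases hp1 with hp1 | ⟨hp1e, hp1y⟩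
            · omega
            · omega
          · exfalso
            have := hkmin l (by omega) ⟨hl, hp2e⟩
            rw [hlew l hl k hkn, hka, hp2e] at this
            omega
        have hcompl := countP_ge_split q (wv q j)
        have hclow : wv q j - 1 ≤ cLT q (wv q j) := by
          have hqj1 := (hqv j hj).1
          rcases Nat.eq_or_lt_of_le hqj1 with h' | h'
          · omega
          · rw [cLT_eq_cLE_pred q hqj1]
            have := hqsat (wv q j - 1) (by omega) (by have := (hqv j hj).2; omega)
            omega
        have haiB : (wv a i - 1) * (B+1) = (wv a j - 1) * (B+1) + (B+1) := by
          have h5 : wv a i - 1 = (wv a j - 1) + 1 := by have := hav j hj; omega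
          rw [h5, Nat.add_mul]
          omega
        unfold gP
        rw [hsplit, hwv j hj, hwv k hkn, hka, haiB]
        have hqj := hqv j hj
        have hqk := hqv k hkn
        have hMz : (Mid : ℤ) + (cLT q (wv q j) : ℤ) ≤ n := by push_cast; omega
        have hclz : (wv q j : ℤ) - 1 ≤ (cLT q (wv q j) : ℤ) := by push_cast; omega
        have hqkz : (1:ℤ) ≤ (wv q k : ℤ) := by exact_mod_cast hqk.1
        have hBz : (n:ℤ) ≤ B := by exact_mod_cast hnB
        push_cast
        linarith [hMz, hclz, hqkz, hBz]
    · -- a_j = a_i : take k = j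
      have haeq : wv a j = wv a i := by
        rw [hlew i hi j hj] at hjle
        omega
      refine ⟨j, hjSi, ?_⟩
      rw [haeq]
      linarith
/-! ### Chaining the transformation lemmas along the parkization recursion -/

lemma cLE_decAbove_ge (d t : ℕ) (y : List ℕ) : cLE y t ≤ cLE (decAbove d y) t := by
  show List.countP _ y ≤ List.countP _ (y.map (fun x => if d < x then x - 1 else x))
  rw [List.countP_map]
  apply List.countP_mono_left
  intro x _ hx
  simp only [Function.comp, decide_eq_true_eq] at hx ⊢
  split <;> omega

lemma chainT3 {n : ℕ} (c : List ℕ) (hcn : c.length = n)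
    (hcpos : ∀ x ∈ c, 1 ≤ x) (hcle : ∀ x ∈ c, x ≤ n) :
    ∀ u, u.length = n → (∀ x ∈ u, 1 ≤ x) →
      park (encW n (park u) c) = park (encW n u c) := by
  intro u hun hupos
  generalize hs : u.sum = s
  induction s using Nat.strong_induction_on generalizing u with
  | _ s ih =>
    rw [park_eq u]
    split
    · rfl
    · rename_i hnp
      subst hs
      have hlt := decAbove_sum_lt hnp
      have hlen : (decAbove (dW u) u).length = n := by rw [decAbove_length]; exact hun
      have hpos := decAbove_pos (dW_pos u) hupos
      calc park (encW n (park (decAbove (dW u) u)) c)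
          = park (encW n (decAbove (dW u) u) c) := ih _ hlt _ hlen hpos rfl
        _ = park (encW n u c) := by
            rw [park_eq_Nw (encW_pos hcpos), park_eq_Nw (encW_pos hcpos)]
            exact T3step hun hcn hupos hcpos hcle (by rw [hun]; omega)

lemma chainT2 {n : ℕ} (a : List ℕ) (han : a.length = n) (hapos : ∀ x ∈ a, 1 ≤ x) :
    ∀ y, y.length = n → (∀ x ∈ y, 1 ≤ x) → (∀ x ∈ y, x ≤ n * n) →
      (∀ k, 1 ≤ k → k ≤ n → k ≤ cLE y (k * n)) →
      park (encW (n*n) a (park y)) = park (encW (n*n) a y) := by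
  intro y hyn hypos hyB hI
  generalize hs : y.sum = s
  induction s using Nat.strong_induction_on generalizing y with
  | _ s ih =>
    rw [park_eq y]
    split
    · rfl
    · rename_i hnp
      subst hs
      have hlt := decAbove_sum_lt hnp
      have hlen : (decAbove (dW y) y).length = n := by rw [decAbove_length]; exact hyn
      have hpos := decAbove_pos (dW_pos y) hypos
      have hB' := decAbove_le (d := dW y) hyB
      have hI' : ∀ k, 1 ≤ k → k ≤ n → k ≤ cLE (decAbove (dW y) y) (k * n) :=
        fun k h1 h2 => le_trans (hI k h1 h2) (cLE_decAbove_ge _ _ _)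
      calc park (encW (n*n) a (park (decAbove (dW y) y)))
          = park (encW (n*n) a (decAbove (dW y) y)) := ih _ hlt _ hlen hpos hB' hI' rfl
        _ = park (encW (n*n) a y) := by
            rw [park_eq_Nw (encW_pos hpos), park_eq_Nw (encW_pos hypos)]
            exact T2step han hyn hapos hypos hyB hI (by rw [hyn]; omega)

lemma chainT1 {n : ℕ} (a q : List ℕ) (han : a.length = n) (hqn : q.length = n)
    (hapos : ∀ x ∈ a, 1 ≤ x) (hale : ∀ x ∈ a, x ≤ n)
    (hqpos : ∀ x ∈ q, 1 ≤ x) (hqle : ∀ x ∈ q, x ≤ n)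
    (hqsat : ∀ t, 1 ≤ t → t ≤ n → t ≤ cLE q t) (hn1 : 1 ≤ n) :
    ∀ B, n ≤ B → park (encW B a q) = park (encW n a q) := by
  intro B
  induction B with
  | zero => intro h; exact absurd h (by omega)
  | succ m ihm =>
    intro hm
    rcases Nat.eq_or_lt_of_le hm with h | h
    · rw [← h]
    · have hmn : n ≤ m := by omega
      calc park (encW (m+1) a q) = park (encW m a q) := by
            rw [park_eq_Nw (encW_pos hqpos), park_eq_Nw (encW_pos hqpos)]
            exact (T1step han hqn hapos hale hqpos hqle hqsat hmn hn1).symm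
        _ = park (encW n a q) := ihm hmn
/-! ### Assembly -/

lemma park_nil : park ([] : List ℕ) = [] := by
  rw [park_eq]
  have : dW ([] : List ℕ) = 1 :=
    _root_.le_antisymm (Nat.sInf_le ⟨le_rfl, by simp⟩) (dW_pos [])
  simp [this]

lemma isPF_sat {w : List ℕ} (h : IsPF w) :
    ∀ t, 1 ≤ t → t ≤ w.length → t ≤ cLE w t := (isPF_iff_counts.mp h).2

theorem iprod_isPF_and_assoc' (n : ℕ) (a b c : List ℕ)
    (ha : IsPF a) (hb : IsPF b) (hc : IsPF c)
    (hla : a.length = n) (hlb : b.length = n) (hlc : c.length = n) :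
    (IsPF (iprod a b) ∧ (iprod a b).length = n) ∧
      iprod (iprod a b) c = iprod a (iprod b c) := by
  have hapos := ha.1
  have hbpos := hb.1
  have hcpos := hc.1
  have hale : ∀ x ∈ a, x ≤ n := fun x hx => hla ▸ isPF_letter_le ha x hx
  have hble : ∀ x ∈ b, x ≤ n := fun x hx => hlb ▸ isPF_letter_le hb x hx
  have hcle : ∀ x ∈ c, x ≤ n := fun x hx => hlc ▸ isPF_letter_le hc x hx
  have hiab : iprod a b = park (encW n a b) := by
    unfold iprod; rw [hla, pairEnc_eq_encW]
  have habPF : IsPF (iprod a b) := by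
    rw [hiab]; exact park_isPF (encW_pos hbpos)
  have hablen : (iprod a b).length = n := by
    rw [hiab, park_length, encW_length hla hlb]
  refine ⟨⟨habPF, hablen⟩, ?_⟩
  rcases Nat.eq_zero_or_pos n with rfl | hn1
  · -- degenerate case
    have hae : a = [] := List.eq_nil_of_length_eq_zero hla
    have hbe : b = [] := List.eq_nil_of_length_eq_zero hlb
    have hce : c = [] := List.eq_nil_of_length_eq_zero hlc
    subst hae; subst hbe; subst hce
    have hee : iprod ([]:List ℕ) [] = [] := by
      show park (pairEnc _ [] []) = []
      simp [pairEnc, park_nil]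
    rw [hee]
  · -- main case
    set u := encW n a b with hudef
    set v := encW n b c with hvdef
    set q := park v with hqdef
    have hvlen : v.length = n := encW_length hlb hlc
    have hvpos : ∀ x ∈ v, 1 ≤ x := encW_pos hcpos
    have hnn : n ≤ n * n := by
      calc n = n * 1 := (Nat.mul_one n).symm
      _ ≤ n * n := Nat.mul_le_mul_left n hn1
    have hvle : ∀ x ∈ v, x ≤ n * n := by
      intro x hx
      rw [List.mem_iff_getElem] at hx
      obtain ⟨i, hi, rfl⟩ := hx
      rw [hvlen] at hi
      rw [← wv_lt_length (by omega), encW_wv hlb hlc hi]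
      have hb1 : 1 ≤ wv b i := hbpos _ (wv_mem (by omega))
      have hbn : wv b i ≤ n := hble _ (wv_mem (by omega))
      have hc1 : wv c i ≤ n := hcle _ (wv_mem (by omega))
      have hmul : (wv b i - 1) * n ≤ (n - 1) * n := Nat.mul_le_mul_right n (by omega)
      have hid : (n - 1) * n + n = n * n := by
        calc (n - 1) * n + n = ((n-1) + 1) * n := (Nat.succ_mul _ _).symm
        _ = n * n := by congr 1; omega
      omega
    have hIv : ∀ k, 1 ≤ k → k ≤ n → k ≤ cLE v (k * n) := by
      intro k h1 h2
      have htr : cLE b k ≤ cLE v (k * n) := by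
        apply countP_le_transfer (by omega)
        intro l hl hp
        rw [hlb] at hl
        simp only [decide_eq_true_eq] at hp ⊢
        rw [encW_wv hlb hlc hl]
        have hb1 : 1 ≤ wv b l := hbpos _ (wv_mem (by omega))
        have hc1 : wv c l ≤ n := hcle _ (wv_mem (by omega))
        have hmul : (wv b l - 1) * n ≤ (k - 1) * n := Nat.mul_le_mul_right n (by omega)
        have hid : (k - 1) * n + n = k * n := by
          calc (k - 1) * n + n = ((k-1) + 1) * n := (Nat.succ_mul _ _).symm
          _ = k * n := by congr 1; omega
        omega
      have := isPF_sat hb k h1 (by omega)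
      omega
    have hqPF : IsPF q := park_isPF hvpos
    have hqlen : q.length = n := by rw [hqdef, park_length, hvlen]
    have hqpos : ∀ x ∈ q, 1 ≤ x := park_pos hvpos
    have hqle : ∀ x ∈ q, x ≤ n := fun x hx => hqlen ▸ isPF_letter_le hqPF x hx
    have hqsat : ∀ t, 1 ≤ t → t ≤ n → t ≤ cLE q t := by
      intro t h1 h2
      exact isPF_sat hqPF t h1 (by omega)
    -- LHS
    have hulen : u.length = n := encW_length hla hlb
    have hupos : ∀ x ∈ u, 1 ≤ x := encW_pos hbpos
    have hLHS : iprod (iprod a b) c = park (encW n u c) := by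
      have h0 : iprod (iprod a b) c
          = park (pairEnc (iprod a b).length (iprod a b) c) := rfl
      rw [h0, hablen, hiab, pairEnc_eq_encW]
      exact chainT3 c hlc hcpos hcle u hulen hupos
    have hE1 : encW n u c = encW (n*n) a v := by
      apply List.ext_getElem
      · rw [encW_length hulen hlc, encW_length hla hvlen]
      · intro i hi1 hi2
        have hi : i < n := by rw [encW_length hulen hlc] at hi1; omega
        rw [← wv_lt_length hi1, ← wv_lt_length hi2,
          encW_wv hulen hlc hi, encW_wv hla hvlen hi, hudef, encW_wv hla hlb hi,
          hvdef, encW_wv hlb hlc hi]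
        have hb1 : 1 ≤ wv b i := hbpos _ (wv_mem (by omega))
        have e : (wv a i - 1) * n + wv b i - 1 = (wv a i - 1) * n + (wv b i - 1) := by omega
        rw [e, Nat.add_mul]
        ring
    -- RHS
    have hibc : iprod b c = q := by
      unfold iprod
      rw [hlb, pairEnc_eq_encW]
    have hRHS : iprod a (iprod b c) = park (encW n a q) := by
      have h0 : iprod a (iprod b c)
          = park (pairEnc a.length a (iprod b c)) := rfl
      rw [h0, hla, hibc, pairEnc_eq_encW]
    rw [hLHS, hE1, hRHS]
    rw [← chainT1 a q hla hqlen hapos hale hqpos hqle hqsat hn1 (n*n) hnn]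
    rw [hqdef]
    exact (chainT2 a hla hapos v hvlen hvpos hvle hIv).symm
/-- For all `a, b, c ∈ PF_n`, the internal product `a * b = Park(a ⊛ b)`
is again in `PF_n`, and the internal product is associative. -/
theorem iprod_isPF_and_assoc (n : ℕ) (a b c : List ℕ)
    (ha : IsPF a) (hb : IsPF b) (hc : IsPF c)
    (hla : a.length = n) (hlb : b.length = n) (hlc : c.length = n) :
    (IsPF (iprod a b) ∧ (iprod a b).length = n) ∧
      iprod (iprod a b) c = iprod a (iprod b c) :=
  iprod_isPF_and_assoc' n a b c ha hb hc hla hlb hlc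
end

section
/- Let 1^n denote the parking function of length n with all letters equal to 1. Then 1^n * b = b for every parking function b of length n, so 1^n is a left unit for the internal product; but for every n ≥ 3, (2,1,1,…,1) * 1^n = (n,1,1,…,1) ≠ (2,1,1,…,1), so 1^n is not a right unit. -/
open List

/-- If the count condition holds for all `1 ≤ i ≤ |w|`, then `dW w = |w| + 1`. -/
lemma dW_eq_len_succ {w : List ℕ}
    (h : ∀ i, 1 ≤ i → i ≤ w.length → i ≤ w.countP (fun x => decide (x ≤ i))) :
    dW w = w.length + 1 := by
  have hne : Set.Nonempty {i | 1 ≤ i ∧ w.countP (fun x => decide (x ≤ i)) < i} :=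
    ⟨_, mem_dW_set w⟩
  obtain ⟨h1, h2⟩ := Nat.sInf_mem hne
  have hle : sInf {i | 1 ≤ i ∧ w.countP (fun x => decide (x ≤ i)) < i} ≤ w.length + 1 :=
    Nat.sInf_le (mem_dW_set w)
  rw [dW]
  by_contra hc
  have := h (sInf {i | 1 ≤ i ∧ w.countP (fun x => decide (x ≤ i)) < i}) h1 (by omega)
  omega

lemma park_eq_self {w : List ℕ} (h : dW w = w.length + 1) : park w = w := by
  rw [park, dif_pos h]

lemma countP_replicate_one {i k : ℕ} (hi : 1 ≤ i) :
    (List.replicate k 1).countP (fun x => decide (x ≤ i)) = k := by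
  induction k with
  | zero => simp
  | succ k ih => simp [List.replicate_succ, List.countP_cons, ih, hi]

lemma pf_count {b : List ℕ} (hb : IsPF b) :
    ∀ i, 1 ≤ i → i ≤ b.length → i ≤ b.countP (fun x => decide (x ≤ i)) := by
  intro i _ hi
  obtain ⟨-, h2⟩ := hb
  set s := sortW b with hs
  have hperm : s.Perm b := List.mergeSort_perm b _
  have hlen : s.length = b.length := hperm.length_eq
  rw [← hperm.countP_eq]
  have hsplit : s = s.take i ++ s.drop i := (List.take_append_drop i s).symm
  have htlen : (s.take i).length = i := by
    rw [List.length_take]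
    omega
  have hall : ∀ a ∈ s.take i, (fun x => decide (x ≤ i)) a = true := by
    intro a ha
    obtain ⟨j, hj, hja⟩ := List.getElem_of_mem ha
    rw [List.getElem_take] at hja
    have hji : j < i := by omega
    have hjb : j < b.length := by omega
    have := h2 j hjb
    have hgd : s.getD j 0 = s[j]'(by omega) := List.getD_eq_getElem s 0 (by omega)
    rw [hgd] at this
    simp only [decide_eq_true_eq]
    omega
  have hcnt : (s.take i).countP (fun x => decide (x ≤ i)) = i := by
    rw [List.countP_eq_length.mpr hall, htlen]
  calc i = (s.take i).countP (fun x => decide (x ≤ i)) := hcnt.symm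
    _ ≤ s.countP (fun x => decide (x ≤ i)) := by
        conv_rhs => rw [hsplit]
        rw [List.countP_append]
        omega

lemma park_pf {b : List ℕ} (hb : IsPF b) : park b = b :=
  park_eq_self (dW_eq_len_succ (pf_count hb))

lemma dW_head_ones {n : ℕ} (hn : 3 ≤ n) :
    dW ((n + 1) :: List.replicate (n - 1) 1) = n := by
  have hcnt : ∀ i, 1 ≤ i →
      ((n + 1) :: List.replicate (n - 1) 1).countP (fun x => decide (x ≤ i))
        = (n - 1) + (if n + 1 ≤ i then 1 else 0) := by
    intro i hi
    rw [List.countP_cons, countP_replicate_one hi]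
    by_cases h : n + 1 ≤ i <;> simp [h]
  apply Nat.le_antisymm
  · apply Nat.sInf_le
    constructor
    · omega
    · rw [hcnt n (by omega), if_neg (by omega)]
      omega
  · set S := {i | 1 ≤ i ∧ ((n + 1) :: List.replicate (n - 1) 1).countP
        (fun x => decide (x ≤ i)) < i} with hS
    have hne : S.Nonempty := ⟨_, mem_dW_set _⟩
    have hmem := Nat.sInf_mem hne
    obtain ⟨h1, h2⟩ := hmem
    by_contra hc
    push_neg at hc
    have hlt : sInf S < n := hc
    rw [hcnt _ h1, if_neg (by omega)] at h2
    omega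

lemma park_head_ones {n : ℕ} (hn : 3 ≤ n) :
    park ((n + 1) :: List.replicate (n - 1) 1) = n :: List.replicate (n - 1) 1 := by
  have hd := dW_head_ones hn
  have hne : dW ((n + 1) :: List.replicate (n - 1) 1)
      ≠ ((n + 1) :: List.replicate (n - 1) 1).length + 1 := by
    simp [hd]
    omega
  rw [park, dif_neg hne]
  simp only [hd]
  have hdec : decAbove n ((n + 1) :: List.replicate (n - 1) 1)
      = n :: List.replicate (n - 1) 1 := by
    simp only [decAbove, List.map_cons, List.map_replicate]
    rw [if_pos (by omega), if_neg (by omega)]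
    simp
  rw [hdec]
  apply park_eq_self
  apply dW_eq_len_succ
  intro i h1 h2
  simp only [List.length_cons, List.length_replicate] at h2
  rw [List.countP_cons, countP_replicate_one h1]
  by_cases h : n ≤ i <;> simp [h] <;> omega

/-- `1ⁿ * b = b` for every `b ∈ PF_n`, so `1ⁿ` is a left unit for the
internal product; but for `n ≥ 3`, `(2,1,…,1) * 1ⁿ = (n,1,…,1) ≠ (2,1,…,1)`,
so `1ⁿ` is not a right unit. -/
theorem ones_left_unit_not_right_unit (n : ℕ) :
    (∀ b : List ℕ, IsPF b → b.length = n → iprod (onesW n) b = b) ∧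
    (3 ≤ n →
      iprod (2 :: onesW (n - 1)) (onesW n) = n :: onesW (n - 1) ∧
        n :: onesW (n - 1) ≠ 2 :: onesW (n - 1)) := by
  constructor
  · intro b hb hlen
    have hpe : pairEnc n (onesW n) b = b := by
      unfold pairEnc onesW
      rw [← hlen]
      clear hb hlen
      induction b with
      | nil => simp
      | cons x xs ih =>
        simp only [List.length_cons, List.replicate_succ, List.zipWith_cons_cons]
        congr 1
        · omega
        · -- zipWith over replicate (xs.length) 1 and xs with coefficient n is xs
          have : ∀ (l : List ℕ) (m : ℕ),
              List.zipWith (fun x y => (x - 1) * m + y) (List.replicate l.length 1) l = l := by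
            intro l m
            induction l with
            | nil => simp
            | cons z zs ih2 =>
              simp only [List.length_cons, List.replicate_succ, List.zipWith_cons_cons]
              rw [ih2]
              congr 1
              omega
          exact this xs (x :: xs).length
    unfold iprod
    rw [show (onesW n).length = n by simp [onesW], hpe]
    exact park_pf hb
  · intro hn
    have hlen : (2 :: onesW (n - 1)).length = n := by
      simp [onesW]
      omega
    have hpe : pairEnc n (2 :: onesW (n - 1)) (onesW n)
        = (n + 1) :: List.replicate (n - 1) 1 := by
      have hrep : List.replicate n 1 = 1 :: List.replicate (n - 1) 1 := by
        conv_lhs => rw [show n = n - 1 + 1 by omega]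
        rw [List.replicate_succ]
      unfold pairEnc onesW
      rw [hrep, List.zipWith_cons_cons, List.zipWith_replicate]
      congr 1
      · omega
      · simp
    constructor
    · unfold iprod
      rw [hlen, hpe]
      exact park_head_ones hn
    · intro h
      have := List.head_eq_of_cons_eq h
      omega
end
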